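/- arXiv:1706.04135 — 2 statements merged into one kernel-verified Lean document; each statement's English description precedes it below -/
import Mathlib

section
/- The shrinking Cantor fan F_{C_ω} is 1/3-homogeneous. -/
open Set Filter Topology Metric

namespace FansHomogeneity

/-- `A` is an arc in `X` with endpoints `p` and `q`. -/
def IsArcWith {X : Type*} [TopologicalSpace X] (A : Set X) (p q : X) : Prop :=
  ∃ h : unitInterval ≃ₜ A, (h 0 : X) = p ∧ (h 1 : X) = q

/-- `A` is the (possibly degenerate) arc with endpoints `p` and `q`:
either `p = q` and `A = {p}`, or `A` is an arc from `p` to `q`. -/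
def IsArcOrPt {X : Type*} [TopologicalSpace X] (A : Set X) (p q : X) : Prop :=
  (p = q ∧ A = {p}) ∨ IsArcWith A p q

/-- A subcontinuum of a space: a nonempty compact connected subset. -/
def IsSubcontinuum {X : Type*} [TopologicalSpace X] (A : Set X) : Prop :=
  IsCompact A ∧ IsConnected A

/-- A space is hereditarily unicoherent if the intersection of any two subcontinua
is connected. -/
def HereditarilyUnicoherent (X : Type*) [TopologicalSpace X] : Prop :=
  ∀ A B : Set X, IsSubcontinuum A → IsSubcontinuum B → IsPreconnected (A ∩ B)

/-- A space is arcwise connected if any two distinct points are the endpoints of an arc. -/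
def ArcwiseConnected (X : Type*) [TopologicalSpace X] : Prop :=
  ∀ p q : X, p ≠ q → ∃ A : Set X, IsArcWith A p q

/-- A dendroid: an arcwise connected, hereditarily unicoherent continuum
(nonempty compact connected metric space). -/
def IsDendroid (X : Type*) [MetricSpace X] : Prop :=
  CompactSpace X ∧ ConnectedSpace X ∧ ArcwiseConnected X ∧ HereditarilyUnicoherent X

/-- `p` has order at least `n`: `p` is a common endpoint of `n` arcs in `X` which
pairwise intersect only in `p`. -/
def OrderGe (X : Type*) [TopologicalSpace X] (p : X) (n : ℕ) : Prop :=
  ∃ F : Fin n → Set X, (∀ i, ∃ q : X, IsArcWith (F i) p q) ∧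
    ∀ i j, i ≠ j → F i ∩ F j = {p}

/-- The endpoints of `X`: points of order exactly `1`. -/
def endpoints (X : Type*) [TopologicalSpace X] : Set X :=
  {p | OrderGe X p 1 ∧ ¬ OrderGe X p 2}

/-- The ordinary points of `X`: points of order exactly `2`. -/
def ordinaryPoints (X : Type*) [TopologicalSpace X] : Set X :=
  {p | OrderGe X p 2 ∧ ¬ OrderGe X p 3}

/-- The ramification points of `X`: points of order greater than `2`. -/
def ramificationPoints (X : Type*) [TopologicalSpace X] : Set X :=
  {p | OrderGe X p 3}

/-- A fan with top `t`: a dendroid whose unique ramification point is `t`. -/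
def IsFanWithTop (X : Type*) [MetricSpace X] (t : X) : Prop :=
  IsDendroid X ∧ ramificationPoints X = {t}

/-- A fan: a dendroid with exactly one ramification point. -/
def IsFan (X : Type*) [MetricSpace X] : Prop :=
  ∃ t : X, IsFanWithTop X t

/-- The orbit of a point under the action of the homeomorphism group of `X`. -/
def orbit (X : Type*) [TopologicalSpace X] (x : X) : Set X :=
  {y | ∃ h : X ≃ₜ X, h x = y}

/-- `A` is an orbit of the action of the homeomorphism group of `X` on `X`. -/
def IsOrbit (X : Type*) [TopologicalSpace X] (A : Set X) : Prop :=
  ∃ x : X, A = orbit X x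

/-- The set of orbits of the action of the homeomorphism group of `X` on `X`. -/
def orbits (X : Type*) [TopologicalSpace X] : Set (Set X) :=
  {A | IsOrbit X A}

/-- `X` is `1/n`-homogeneous (has homogeneity degree `n`): the action of the
homeomorphism group of `X` on `X` has exactly `n` orbits. -/
def OneOverHomogeneous (X : Type*) [TopologicalSpace X] (n : ℕ) : Prop :=
  (orbits X).ncard = n

/-- A fan `X` with top `t` is smooth at `t` with respect to `a` if for every sequence
converging to `a` the arcs from `t` converge, in the Hausdorff metric, to the arc `t a`. -/
def SmoothAt (X : Type*) [MetricSpace X] (t a : X) : Prop :=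
  ∀ (α : ℕ → X) (A : ℕ → Set X) (B : Set X),
    Tendsto α atTop (nhds a) → (∀ n, IsArcOrPt (A n) t (α n)) → IsArcOrPt B t a →
    Tendsto (fun n => hausdorffDist (A n) B) atTop (nhds 0)

/-- `S(X)`: the set of points `a` such that `X` is smooth at the top `t` with respect to `a`. -/
def smoothSet (X : Type*) [MetricSpace X] (t : X) : Set X :=
  {a | SmoothAt X t a}

/-- A smooth fan with top `t`. -/
def IsSmoothFanWithTop (X : Type*) [MetricSpace X] (t : X) : Prop :=
  IsFanWithTop X t ∧ smoothSet X t = univ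

/-- A smooth fan. -/
def IsSmoothFan (X : Type*) [MetricSpace X] : Prop :=
  ∃ t : X, IsSmoothFanWithTop X t

/-- The relation on `cantorSet × [0,1]` generating the identification of
`cantorSet × {1}` to a point. -/
def cantorFanRel (a b : ↥cantorSet × unitInterval) : Prop :=
  a.2 = 1 ∧ b.2 = 1

/-- The Cantor fan: the quotient `(C × [0,1]) / (C × {1})` where `C` is the
middle-thirds Cantor set. -/
def CantorFan : Type := Quot cantorFanRel

instance : TopologicalSpace CantorFan :=
  instTopologicalSpaceQuot

/-- The fan `F_ω ⊆ ℝ²`: the union of the segments from `(0,0)` to `(1/i, 1/i²)`, `i ≥ 1`. -/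
def Fomega : Set (ℝ × ℝ) :=
  ⋃ i : ℕ, segment ℝ ((0, 0) : ℝ × ℝ) ((1 / ((i : ℝ) + 1), 1 / ((i : ℝ) + 1) ^ 2) : ℝ × ℝ)

/-- The shrinking Cantor fan `F_{C_ω} ⊆ ℝ²`: for each `i ≥ 1` the union of the segments
from the origin to `(c, 1/2^(i-1))` for `c ∈ C ∩ [(3^(i-1)-1)/3^(i-1), (3^i-2)/3^i]`
(here indexed by `i - 1 ∈ ℕ`). -/
def shrinkingCantorFan : Set (ℝ × ℝ) :=
  ⋃ i : ℕ, ⋃ c ∈ cantorSet ∩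
      Icc (((3 : ℝ) ^ i - 1) / 3 ^ i) (((3 : ℝ) ^ (i + 1) - 2) / 3 ^ (i + 1)),
    segment ℝ ((0, 0) : ℝ × ℝ) ((c, (1 / 2 : ℝ) ^ i) : ℝ × ℝ)

/-- `S` is a simple `n`-od in the plane: the union of `n` straight line segments
which pairwise intersect exactly in a common endpoint. -/
def IsSimpleNod (n : ℕ) (S : Set (ℝ × ℝ)) : Prop :=
  ∃ (o : ℝ × ℝ) (b : Fin n → ℝ × ℝ),
    (∀ i, b i ≠ o) ∧
    S = ⋃ i, segment ℝ o (b i) ∧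
    ∀ i j, i ≠ j → segment ℝ o (b i) ∩ segment ℝ o (b j) = {o}

/-- `X` is colocally connected at `p`: every neighborhood of `p` contains a
neighborhood `V` of `p` such that `X - V` is connected. -/
def ColocallyConnectedAt (X : Type*) [TopologicalSpace X] (p : X) : Prop :=
  ∀ U ∈ nhds p, ∃ V ∈ nhds p, V ⊆ U ∧ IsPreconnected Vᶜ

/-- `X` is homeomorphic to the Lelek fan, i.e. to a smooth fan whose set of
endpoints is dense in it. -/
def HomeoToLelekFan (X : Type*) [TopologicalSpace X] : Prop :=
  ∃ (Y : Type) (m : MetricSpace Y),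
    @IsSmoothFan Y m ∧
    @Dense Y (@UniformSpace.toTopologicalSpace Y
        (@PseudoMetricSpace.toUniformSpace Y m.toPseudoMetricSpace))
      (@endpoints Y (@UniformSpace.toTopologicalSpace Y
        (@PseudoMetricSpace.toUniformSpace Y m.toPseudoMetricSpace))) ∧
    Nonempty (@Homeomorph X Y _ (@UniformSpace.toTopologicalSpace Y
        (@PseudoMetricSpace.toUniformSpace Y m.toPseudoMetricSpace)))



/-! ### Cantor set basics -/

lemma preCantorSet_subset_Icc (n : ℕ) : preCantorSet n ⊆ Icc (0:ℝ) 1 := by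
  induction n with
  | zero => simp
  | succ n ih =>
    rintro x (⟨y, hy, rfl⟩ | ⟨y, hy, rfl⟩) <;>
      obtain ⟨h0, h1⟩ := ih hy <;> constructor <;> simp <;> linarith

lemma div3_mem_cantorSet {x : ℝ} (hx : x ∈ cantorSet) : x / 3 ∈ cantorSet := by
  rw [cantorSet, mem_iInter] at hx ⊢
  intro n
  match n with
  | 0 =>
    obtain ⟨h0, h1⟩ := preCantorSet_subset_Icc 0 (hx 0)
    exact ⟨by linarith, by linarith⟩
  | n + 1 => exact Or.inl ⟨x, hx n, rfl⟩

lemma two_add_div3_mem_cantorSet {x : ℝ} (hx : x ∈ cantorSet) : (2 + x) / 3 ∈ cantorSet := by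
  rw [cantorSet, mem_iInter] at hx ⊢
  intro n
  match n with
  | 0 =>
    obtain ⟨h0, h1⟩ := preCantorSet_subset_Icc 0 (hx 0)
    exact ⟨by linarith, by linarith⟩
  | n + 1 => exact Or.inr ⟨x, hx n, rfl⟩

lemma cantorSet_dichotomy {x : ℝ} (hx : x ∈ cantorSet) : x ≤ 1/3 ∨ 2/3 ≤ x := by
  have h1 : x ∈ preCantorSet 1 := (mem_iInter.mp hx) 1
  rcases h1 with ⟨y, hy, rfl⟩ | ⟨y, hy, rfl⟩
  · obtain ⟨h0, hle⟩ := preCantorSet_subset_Icc 0 hy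
    exact Or.inl (by linarith)
  · obtain ⟨h0, hle⟩ := preCantorSet_subset_Icc 0 hy
    exact Or.inr (by linarith)

lemma cantorSet_mem_Icc {x : ℝ} (hx : x ∈ cantorSet) : x ∈ Icc (0:ℝ) 1 :=
  cantorSet_subset_unitInterval hx

lemma triple_mem_cantorSet_of_le {x : ℝ} (hx : x ∈ cantorSet) (h : x ≤ 1/3) :
    3 * x ∈ cantorSet := by
  rw [cantorSet, mem_iInter] at hx ⊢
  intro n
  have h1 := hx (n + 1)
  rcases h1 with ⟨y, hy, hxy⟩ | ⟨y, hy, hxy⟩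
  · have : 3 * x = y := by rw [← hxy]; ring
    rwa [this]
  · obtain ⟨h0, _⟩ := preCantorSet_subset_Icc n hy
    exfalso
    rw [← hxy] at h
    linarith

lemma triple_sub_two_mem_cantorSet_of_ge {x : ℝ} (hx : x ∈ cantorSet) (h : 2/3 ≤ x) :
    3 * x - 2 ∈ cantorSet := by
  rw [cantorSet, mem_iInter] at hx ⊢
  intro n
  have h1 := hx (n + 1)
  rcases h1 with ⟨y, hy, hxy⟩ | ⟨y, hy, hxy⟩
  · obtain ⟨_, h1'⟩ := preCantorSet_subset_Icc n hy
    exfalso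
    rw [← hxy] at h
    linarith
  · have : 3 * x - 2 = y := by rw [← hxy]; ring
    rwa [this]

/-! ### The pieces `K i` of the shrinking Cantor fan base -/

/-- The `i`-th Cantor piece. -/
def Kpiece (i : ℕ) : Set ℝ :=
  cantorSet ∩ Icc (((3:ℝ) ^ i - 1) / 3 ^ i) (((3:ℝ) ^ (i + 1) - 2) / 3 ^ (i + 1))

lemma Kpiece_eq_image (i : ℕ) :
    Kpiece i = (fun s : ℝ => ((3:ℝ) ^ i - 1) / 3 ^ i + s / 3 ^ (i + 1)) '' cantorSet := by
  induction i with
  | zero =>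
    ext x
    simp only [Kpiece, pow_zero, pow_one, mem_inter_iff, mem_Icc, mem_image]
    constructor
    · rintro ⟨hx, h0, h1⟩
      refine ⟨3 * x, triple_mem_cantorSet_of_le hx (by linarith), by ring⟩
    · rintro ⟨s, hs, rfl⟩
      obtain ⟨hs0, hs1⟩ := cantorSet_mem_Icc hs
      exact ⟨by simpa using div3_mem_cantorSet hs, by linarith, by linarith⟩
  | succ i ih =>
    have hP1 : (1:ℝ) ≤ 3 ^ i := one_le_pow₀ (by norm_num)
    have hP : (0:ℝ) < 3 ^ i := by positivity
    have e1 : (3:ℝ) ^ (i+1) = 3 * 3 ^ i := by ring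
    have e2 : (3:ℝ) ^ (i+1+1) = 9 * 3 ^ i := by ring
    ext x
    simp only [Kpiece, mem_inter_iff, mem_Icc, mem_image, e1, e2]
    constructor
    · rintro ⟨hx, h0, h1⟩
      rw [div_le_iff₀ (by positivity)] at h0
      rw [le_div_iff₀ (by positivity)] at h1
      have hge : 2/3 ≤ x := by nlinarith
      have hz : 3 * x - 2 ∈ cantorSet := triple_sub_two_mem_cantorSet_of_ge hx hge
      have hKz : 3 * x - 2 ∈ Kpiece i := by
        refine ⟨hz, ?_, ?_⟩
        · rw [div_le_iff₀ hP]; nlinarith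
        · rw [e1, le_div_iff₀ (by positivity)]; nlinarith
      rw [ih] at hKz
      obtain ⟨s, hs, hseq⟩ := hKz
      simp only [e1] at hseq
      refine ⟨s, hs, ?_⟩
      field_simp at hseq ⊢
      nlinarith [hseq]
    · rintro ⟨s, hs, rfl⟩
      obtain ⟨hs0, hs1⟩ := cantorSet_mem_Icc hs
      have hB : ((3:ℝ) ^ i - 1) / 3 ^ i + s / 3 ^ (i+1) ∈ Kpiece i := by
        rw [ih]; exact ⟨s, hs, rfl⟩
      have hBc : ((3:ℝ) ^ i - 1) / 3 ^ i + s / 3 ^ (i+1) ∈ cantorSet := hB.1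
      have key : (3 * (3:ℝ) ^ i - 1) / (3 * 3 ^ i) + s / (9 * 3 ^ i)
          = (2 + (((3:ℝ) ^ i - 1) / 3 ^ i + s / 3 ^ (i+1))) / 3 := by
        rw [e1]; field_simp; ring
      refine ⟨by rw [key]; exact two_add_div3_mem_cantorSet hBc, ?_, ?_⟩
      · have h9 : (0:ℝ) < 9 * 3 ^ i := by positivity
        have : 0 ≤ s / (9 * 3 ^ i) := by positivity
        linarith
      · have hA : (3 * (3:ℝ) ^ i - 1) / (3 * 3 ^ i) + s / (9 * 3 ^ i)
            = (9 * 3 ^ i - 3 + s) / (9 * 3 ^ i) := by field_simp; ring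
        rw [hA, div_le_div_iff_of_pos_right]
        · linarith
        · positivity

/-! ### Ternary coding of the Cantor set -/

/-- The real number with ternary digits `2 * x n`. -/
noncomputable def tern (x : ℕ → Bool) : ℝ :=
  ∑' n, (if x n then (2:ℝ) else 0) / 3 ^ (n + 1)

lemma tern_term_nonneg (n : ℕ) (b : Bool) : (0:ℝ) ≤ (if b then (2:ℝ) else 0) / 3 ^ (n + 1) := by
  have h0 : (0:ℝ) ≤ (if b then (2:ℝ) else 0) := by split <;> norm_num
  exact div_nonneg h0 (by positivity)

lemma tern_term_bound (n : ℕ) (b : Bool) :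
    (if b then (2:ℝ) else 0) / 3 ^ (n + 1) ≤ 2 * (1/3) ^ (n + 1) := by
  rw [div_pow, one_pow, mul_one_div]
  split
  · exact le_refl _
  · rw [zero_div]; positivity

lemma geom_summable : Summable (fun n : ℕ => 2 * ((1:ℝ)/3) ^ (n + 1)) := by
  have h : (fun n : ℕ => 2 * ((1:ℝ)/3) ^ (n + 1)) = fun n : ℕ => (2/3) * ((1:ℝ)/3) ^ n := by
    funext n; rw [pow_succ]; ring
  rw [h]
  exact (summable_geometric_of_lt_one (by norm_num) (by norm_num)).mul_left _

lemma tern_summable (x : ℕ → Bool) :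
    Summable fun n => (if x n then (2:ℝ) else 0) / 3 ^ (n + 1) :=
  Summable.of_nonneg_of_le (fun n => tern_term_nonneg n (x n))
    (fun n => tern_term_bound n (x n)) geom_summable

lemma tern_shift (x : ℕ → Bool) :
    tern x = (if x 0 then (2:ℝ) else 0) / 3 + tern (fun n => x (n + 1)) / 3 := by
  rw [tern, Summable.tsum_eq_zero_add (tern_summable x)]
  congr 1
  · norm_num
  · rw [tern, ← tsum_div_const]
    congr 1
    funext n
    rw [div_div]
    ring_nf

lemma tern_nonneg (x : ℕ → Bool) : 0 ≤ tern x :=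
  tsum_nonneg fun n => by positivity

lemma tern_le_one (x : ℕ → Bool) : tern x ≤ 1 := by
  have h : tern x ≤ ∑' n : ℕ, 2 * (1/3:ℝ)^(n+1) :=
    Summable.tsum_le_tsum (fun n => tern_term_bound n (x n)) (tern_summable x) geom_summable
  calc tern x ≤ ∑' n : ℕ, 2 * (1/3:ℝ)^(n+1) := h
  _ = 1 := by
    have : ∀ n : ℕ, 2 * (1/3:ℝ)^(n+1) = (2/3) * (1/3)^n := by
      intro n; rw [pow_succ]; ring
    simp_rw [this]
    rw [tsum_mul_left, tsum_geometric_of_lt_one (by norm_num) (by norm_num)]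
    norm_num

lemma tern_mem_preCantorSet (n : ℕ) (x : ℕ → Bool) : tern x ∈ preCantorSet n := by
  induction n generalizing x with
  | zero => exact ⟨tern_nonneg x, tern_le_one x⟩
  | succ n ih =>
    rw [tern_shift x]
    cases hx0 : x 0 with
    | false =>
      refine Or.inl ⟨tern (fun n => x (n+1)), ih _, ?_⟩
      simp [hx0]
    | true =>
      refine Or.inr ⟨tern (fun n => x (n+1)), ih _, ?_⟩
      simp [hx0]
      ring

lemma tern_mem_cantorSet (x : ℕ → Bool) : tern x ∈ cantorSet :=
  mem_iInter.mpr fun n => tern_mem_preCantorSet n x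

lemma tern_head_eq {x y : ℕ → Bool} (h : tern x = tern y) : x 0 = y 0 := by
  by_contra hne
  have h1 := tern_shift x
  have h2 := tern_shift y
  have hx1 := tern_nonneg (fun n => x (n+1))
  have hx2 := tern_le_one (fun n => x (n+1))
  have hy1 := tern_nonneg (fun n => y (n+1))
  have hy2 := tern_le_one (fun n => y (n+1))
  cases hx0 : x 0 <;> cases hy0 : y 0 <;> rw [hx0] at h1 hne <;> rw [hy0] at h2 hne
  · exact hne rfl
  · norm_num at h1 h2; linarith
  · norm_num at h1 h2; linarith
  · exact hne rfl

lemma tern_injective : Function.Injective tern := by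
  intro x y h
  funext n
  induction n generalizing x y with
  | zero => exact tern_head_eq h
  | succ n ih =>
    have h0 : x 0 = y 0 := tern_head_eq h
    have h1 := tern_shift x
    have h2 := tern_shift y
    rw [h0] at h1
    have : tern (fun m => x (m+1)) = tern (fun m => y (m+1)) := by
      rw [h1, h2] at h; linarith
    exact ih this

/-- One step of the ternary shift on the Cantor set. -/
noncomputable def cantorShift (y : ℝ) : ℝ := if 1/2 < y then 3 * y - 2 else 3 * y

lemma cantorShift_mem {y : ℝ} (hy : y ∈ cantorSet) :
    cantorShift y ∈ cantorSet ∧ y = ((if 1/2 < y then (2:ℝ) else 0) + cantorShift y) / 3 := by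
  rcases cantorSet_dichotomy hy with h | h
  · have hlt : ¬ (1/2 < y) := by linarith
    rw [cantorShift, if_neg hlt, if_neg hlt]
    exact ⟨triple_mem_cantorSet_of_le hy h, by ring⟩
  · have hlt : 1/2 < y := by linarith
    rw [cantorShift, if_pos hlt, if_pos hlt]
    exact ⟨triple_sub_two_mem_cantorSet_of_ge hy h, by ring⟩

/-- The ternary digits of a point of the Cantor set. -/
noncomputable def cantorDigits (y : ℝ) : ℕ → Bool := fun n => decide (1/2 < cantorShift^[n] y)

lemma cantorDigits_succ (y : ℝ) (n : ℕ) :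
    cantorDigits y (n + 1) = cantorDigits (cantorShift y) n := by
  unfold cantorDigits
  rw [Function.iterate_succ_apply]

lemma tern_cantorDigits {y : ℝ} (hy : y ∈ cantorSet) : tern (cantorDigits y) = y := by
  have key : ∀ n : ℕ, ∀ y ∈ cantorSet, |tern (cantorDigits y) - y| ≤ (1/3) ^ n := by
    intro n
    induction n with
    | zero =>
      intro y hy
      obtain ⟨h0, h1⟩ := cantorSet_mem_Icc hy
      have := tern_nonneg (cantorDigits y)
      have := tern_le_one (cantorDigits y)
      rw [pow_zero, abs_le]
      constructor <;> linarith
    | succ n ih =>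
      intro y hy
      obtain ⟨hmem, heq⟩ := cantorShift_mem hy
      have hshift := tern_shift (cantorDigits y)
      have hdig : (if cantorDigits y 0 then (2:ℝ) else 0) = (if 1/2 < y then (2:ℝ) else 0) := by
        unfold cantorDigits
        simp only [Function.iterate_zero_apply, decide_eq_true_eq]
        exact if_congr decide_eq_true_iff rfl rfl
      have htail : (fun n => cantorDigits y (n + 1)) = cantorDigits (cantorShift y) := by
        funext n; exact cantorDigits_succ y n
      rw [hdig, htail] at hshift
      have ihy := ih (cantorShift y) hmem
      have : tern (cantorDigits y) - y = (tern (cantorDigits (cantorShift y)) - cantorShift y) / 3 := by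
        linarith [hshift, heq]
      rw [this, abs_div, abs_of_nonneg (by norm_num : (0:ℝ) ≤ 3)]
      rw [pow_succ]
      calc |tern (cantorDigits (cantorShift y)) - cantorShift y| / 3 ≤ (1/3)^n / 3 := by
            apply div_le_div_of_nonneg_right ihy (by norm_num) |>.trans_eq rfl
      _ = (1/3)^n * (1/3) := by ring
  have habs : ∀ n : ℕ, |tern (cantorDigits y) - y| ≤ (1/3)^n := fun n => key n y hy
  have hlim : Tendsto (fun n : ℕ => ((1:ℝ)/3)^n) atTop (nhds 0) :=
    tendsto_pow_atTop_nhds_zero_of_lt_one (by norm_num) (by norm_num)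
  have : |tern (cantorDigits y) - y| ≤ 0 := ge_of_tendsto hlim (Eventually.of_forall habs)
  have : |tern (cantorDigits y) - y| = 0 := le_antisymm this (abs_nonneg _)
  have := abs_eq_zero.mp this
  linarith

/-- The coding equivalence between Cantor space and the ternary Cantor set. -/
noncomputable def ternEquiv : (ℕ → Bool) ≃ ↥cantorSet :=
  Equiv.ofBijective (fun x => ⟨tern x, tern_mem_cantorSet x⟩)
    ⟨fun x y h => tern_injective (congrArg Subtype.val h),
     fun y => ⟨cantorDigits y.1, Subtype.ext (tern_cantorDigits y.2)⟩⟩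

lemma continuous_tern : Continuous tern := by
  apply continuous_tsum (u := fun n => 2 * (1/3:ℝ)^(n+1))
  · intro n
    have : Continuous fun b : Bool => (if b then (2:ℝ) else 0) / 3 ^ (n+1) :=
      continuous_of_discreteTopology
    exact this.comp (continuous_apply n)
  · exact ((summable_geometric_of_lt_one (by norm_num) (by norm_num)).comp_injective
      (add_left_injective 1)).mul_left 2
  · intro n x
    rw [Real.norm_eq_abs, abs_of_nonneg (tern_term_nonneg n (x n))]
    exact tern_term_bound n (x n)

/-- The coding homeomorphism. -/
noncomputable def ternHomeo : (ℕ → Bool) ≃ₜ ↥cantorSet :=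
  Continuous.homeoOfEquivCompactToT2 (f := ternEquiv)
    (continuous_tern.subtype_mk tern_mem_cantorSet)

/-- XOR translation on Cantor space. -/
def xorHomeo (a : ℕ → Bool) : (ℕ → Bool) ≃ₜ (ℕ → Bool) where
  toFun x := fun n => xor (a n) (x n)
  invFun x := fun n => xor (a n) (x n)
  left_inv x := by
    funext n
    show xor (a n) (xor (a n) (x n)) = x n
    cases a n <;> cases x n <;> rfl
  right_inv x := by
    funext n
    show xor (a n) (xor (a n) (x n)) = x n
    cases a n <;> cases x n <;> rfl
  continuous_toFun := continuous_pi fun n =>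
    (continuous_of_discreteTopology (f := fun b : Bool => xor (a n) b)).comp (continuous_apply n)
  continuous_invFun := continuous_pi fun n =>
    (continuous_of_discreteTopology (f := fun b : Bool => xor (a n) b)).comp (continuous_apply n)

/-- The Cantor set is topologically homogeneous. -/
lemma cantorSet_homogeneous (s s' : ↥cantorSet) :
    ∃ g : ↥cantorSet ≃ₜ ↥cantorSet, g s = s' := by
  set x := ternHomeo.symm s
  set x' := ternHomeo.symm s'
  set a : ℕ → Bool := fun n => xor (x n) (x' n)
  refine ⟨ternHomeo.symm.trans ((xorHomeo a).trans ternHomeo), ?_⟩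
  have hx : xorHomeo a x = x' := by
    funext n
    show xor (xor (x n) (x' n)) (x n) = x' n
    cases x n <;> cases x' n <;> rfl
  simp only [Homeomorph.trans_apply]
  rw [hx]
  exact ternHomeo.apply_symm_apply s'

/-- The affine homeomorphism of `ℝ` mapping `[0,1]` onto the `i`-th piece interval. -/
noncomputable def affHomeo (i : ℕ) : ℝ ≃ₜ ℝ :=
  (Homeomorph.mulRight₀ (((3:ℝ) ^ (i+1))⁻¹) (by positivity)).trans
    (Homeomorph.addLeft ((((3:ℝ) ^ i - 1) / 3 ^ i)))

lemma affHomeo_apply (i : ℕ) (x : ℝ) :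
    affHomeo i x = ((3:ℝ) ^ i - 1) / 3 ^ i + x / 3 ^ (i+1) := by
  simp [affHomeo, Homeomorph.mulRight₀, div_eq_mul_inv]
  rfl

lemma affHomeo_image (i : ℕ) : affHomeo i '' cantorSet = Kpiece i := by
  rw [Kpiece_eq_image]
  apply image_congr
  intro x _
  exact affHomeo_apply i x

/-- Homeomorphism from the Cantor set to its `i`-th piece. -/
noncomputable def pieceHomeo (i : ℕ) : ↥cantorSet ≃ₜ ↥(Kpiece i) :=
  ((affHomeo i).image cantorSet).trans (Homeomorph.setCongr (affHomeo_image i))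

lemma pieceHomeo_apply (i : ℕ) (s : ↥cantorSet) :
    (pieceHomeo i s : ℝ) = ((3:ℝ) ^ i - 1) / 3 ^ i + (s:ℝ) / 3 ^ (i+1) := by
  have h1 : (pieceHomeo i s : ℝ) = affHomeo i (s : ℝ) := rfl
  rw [h1, affHomeo_apply]

/-- Any point of any piece can be carried to any point of any other piece. -/
lemma exists_pieceHomeo {i j : ℕ} {c c' : ℝ} (hc : c ∈ Kpiece i) (hc' : c' ∈ Kpiece j) :
    ∃ φ : ↥(Kpiece i) ≃ₜ ↥(Kpiece j), φ ⟨c, hc⟩ = ⟨c', hc'⟩ := by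
  obtain ⟨g, hg⟩ := cantorSet_homogeneous ((pieceHomeo i).symm ⟨c, hc⟩) ((pieceHomeo j).symm ⟨c', hc'⟩)
  refine ⟨(pieceHomeo i).symm.trans (g.trans (pieceHomeo j)), ?_⟩
  simp only [Homeomorph.trans_apply, hg]
  exact (pieceHomeo j).apply_symm_apply _

/-! ### The shrinking Cantor fan -/

local notation "𝕊" => shrinkingCantorFan

lemma mem_fan_iff {p : ℝ × ℝ} :
    p ∈ 𝕊 ↔ ∃ i c t, c ∈ Kpiece i ∧ t ∈ Icc (0:ℝ) 1 ∧ p = (t * c, t * (1/2) ^ i) := by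
  simp only [shrinkingCantorFan, mem_iUnion, exists_prop]
  constructor
  · rintro ⟨i, c, hc, hseg⟩
    rw [segment_eq_image] at hseg
    obtain ⟨t, ht, hp⟩ := hseg
    refine ⟨i, c, t, hc, ht, ?_⟩
    rw [← hp]
    simp [Prod.ext_iff]
  · rintro ⟨i, c, t, hc, ht, rfl⟩
    refine ⟨i, c, hc, ?_⟩
    rw [segment_eq_image]
    refine ⟨t, ht, ?_⟩
    simp [Prod.ext_iff]

lemma zero_mem_Kpiece : (0:ℝ) ∈ Kpiece 0 := by
  refine ⟨zero_mem_cantorSet, ?_, ?_⟩ <;> norm_num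

lemma zero_mem_fan : ((0,0) : ℝ × ℝ) ∈ 𝕊 :=
  mem_fan_iff.mpr ⟨0, 0, 0, zero_mem_Kpiece, ⟨le_refl _, by norm_num⟩, by norm_num⟩

lemma Kpiece_subset_cantorSet (i : ℕ) : Kpiece i ⊆ cantorSet := fun _ h => h.1

lemma Kpiece_nonneg {i : ℕ} {c : ℝ} (hc : c ∈ Kpiece i) : 0 ≤ c :=
  (cantorSet_mem_Icc hc.1).1

lemma Kpiece_le_one {i : ℕ} {c : ℝ} (hc : c ∈ Kpiece i) : c ≤ 1 :=
  (cantorSet_mem_Icc hc.1).2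

/-- lower bound for the "slope ratio" `c * 2 ^ i`. -/
lemma ratio_lb {i : ℕ} {c : ℝ} (hc : c ∈ Kpiece i) : (2:ℝ)^i - (2/3)^i ≤ c * 2 ^ i := by
  have h := hc.2.1
  have h3 : (0:ℝ) < 3 ^ i := by positivity
  rw [div_le_iff₀ h3] at h
  have h23 : ((2:ℝ)/3)^i * 3^i = 2^i := by
    rw [div_pow, div_mul_cancel₀]
    positivity
  nlinarith [pow_pos (show (0:ℝ) < 2 by norm_num) i, pow_pos (show (0:ℝ) < 3 by norm_num) i]

lemma ratio_ub {i : ℕ} {c : ℝ} (hc : c ∈ Kpiece i) : c * 2 ^ i ≤ (2:ℝ)^i - (2/3)^(i+1) := by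
  have h := hc.2.2
  have h3 : (0:ℝ) < 3 ^ (i+1) := by positivity
  rw [le_div_iff₀ h3] at h
  have h23 : ((2:ℝ)/3)^(i+1) * 3^(i+1) = 2^(i+1) := by
    rw [div_pow, div_mul_cancel₀]
    positivity
  have e1 : (3:ℝ)^(i+1) = 3 * 3^i := by ring
  have e2 : (2:ℝ)^(i+1) = 2 * 2^i := by ring
  nlinarith [pow_pos (show (0:ℝ) < 2 by norm_num) i, pow_pos (show (0:ℝ) < 3 by norm_num) i]

lemma ratio_ub' {i : ℕ} {c : ℝ} (hc : c ∈ Kpiece i) : c * 2 ^ i < (2:ℝ)^i := by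
  have := ratio_ub hc
  have : (0:ℝ) < (2/3)^(i+1) := by positivity
  linarith [ratio_ub hc]

lemma ratio_lb' {i : ℕ} {c : ℝ} (hc : c ∈ Kpiece i) (hi : 1 ≤ i) : (2:ℝ)^(i-1) < c * 2 ^ i := by
  have hlb := ratio_lb hc
  have he : (2:ℝ)^i = 2 * 2^(i-1) := by
    rw [← pow_succ']
    congr 1
    omega
  have h1 : ((2:ℝ)/3)^i < 2^(i-1) :=
    lt_of_lt_of_le (pow_lt_one₀ (by norm_num) (by norm_num) (by omega))
      (one_le_pow₀ (by norm_num))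
  linarith

/-- ratios of different pieces are separated by `2 ^ i`. -/
lemma ratio_disjoint {i j : ℕ} {c c' : ℝ} (hc : c ∈ Kpiece i) (hc' : c' ∈ Kpiece j)
    (hij : i < j) : c * 2 ^ i < c' * 2 ^ j := by
  have h1 : c * 2 ^ i < (2:ℝ)^i := ratio_ub' hc
  have h2 : (2:ℝ)^(j-1) < c' * 2 ^ j := ratio_lb' hc' (by omega)
  have h3 : (2:ℝ)^i ≤ 2^(j-1) := pow_le_pow_right₀ (by norm_num) (by omega)
  linarith

lemma repr_unique {i j : ℕ} {c c' t t' : ℝ} (hc : c ∈ Kpiece i) (hc' : c' ∈ Kpiece j)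
    (ht : 0 < t) (ht' : 0 < t')
    (h : ((t * c, t * (1/2) ^ i) : ℝ × ℝ) = (t' * c', t' * (1/2) ^ j)) :
    i = j ∧ c = c' ∧ t = t' := by
  have h1 : t * c = t' * c' := congrArg Prod.fst h
  have h2 : t * (1/2:ℝ) ^ i = t' * (1/2) ^ j := congrArg Prod.snd h
  have hp2i : (0:ℝ) < (1/2)^i := by positivity
  have hp2j : (0:ℝ) < (1/2)^j := by positivity
  have hinv : ∀ k : ℕ, ((1:ℝ)/2)^k * 2^k = 1 := by
    intro k
    rw [← mul_pow]
    norm_num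
  have hratio : c * 2 ^ i = c' * 2 ^ j := by
    have ht'' : t = t' * (1/2)^j * 2^i := by
      have hmul := congrArg (fun z => z * 2^i) h2
      calc t = t * ((1/2:ℝ)^i * 2^i) := by rw [hinv i, mul_one]
      _ = t * (1/2)^i * 2^i := by ring
      _ = t' * (1/2)^j * 2^i := hmul
    rw [ht''] at h1
    have hc2 : (1/2:ℝ)^j * 2^i * c = c' := by
      apply mul_left_cancel₀ (ne_of_gt ht')
      calc t' * ((1/2:ℝ)^j * 2^i * c) = t' * (1/2)^j * 2^i * c := by ring
      _ = t' * c' := h1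
    calc c * 2^i = ((1/2:ℝ)^j * 2^i * c) * 2^j := by
          rw [show ((1/2:ℝ)^j * 2^i * c) * 2^j = (c * 2^i) * ((1/2)^j * 2^j) from by ring,
            hinv j, mul_one]
    _ = c' * 2^j := by rw [hc2]
  have hij : i = j := by
    rcases lt_trichotomy i j with hlt | heq | hgt
    · exact absurd hratio (ne_of_lt (ratio_disjoint hc hc' hlt))
    · exact heq
    · exact absurd hratio.symm (ne_of_lt (ratio_disjoint hc' hc hgt))
  subst hij
  have htt : t = t' := mul_right_cancel₀ (ne_of_gt hp2i) h2
  subst htt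
  have hcc : c = c' := by
    have := mul_left_cancel₀ (ne_of_gt ht) h1
    exact this
  exact ⟨rfl, hcc, rfl⟩

/-! ### Canonical representation of fan points -/

lemma fan_pt_mem {i : ℕ} {c t : ℝ} (hc : c ∈ Kpiece i) (ht : t ∈ Icc (0:ℝ) 1) :
    ((t * c, t * (1/2) ^ i) : ℝ × ℝ) ∈ 𝕊 :=
  mem_fan_iff.mpr ⟨i, c, t, hc, ht, rfl⟩

lemma fan_pt_snd_pos {i : ℕ} {t : ℝ} (ht : 0 < t) : 0 < t * (1/2:ℝ) ^ i := by positivity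

lemma fan_pt_ne_zero {i : ℕ} {c t : ℝ} (ht : 0 < t) :
    ((t * c, t * (1/2) ^ i) : ℝ × ℝ) ≠ (0, 0) := by
  intro h
  have h2 := congrArg Prod.snd h
  simp only at h2
  have := fan_pt_snd_pos (i := i) ht
  rw [h2] at this
  exact lt_irrefl 0 this

lemma exists_rep {p : ℝ × ℝ} (hp : p ∈ 𝕊) (h0 : p ≠ (0,0)) :
    ∃ r : ℕ × ℝ × ℝ, r.2.1 ∈ Kpiece r.1 ∧ r.2.2 ∈ Ioc (0:ℝ) 1 ∧
      p = (r.2.2 * r.2.1, r.2.2 * (1/2) ^ r.1) := by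
  obtain ⟨i, c, t, hc, ht, hp'⟩ := mem_fan_iff.mp hp
  have ht0 : 0 < t := by
    rcases eq_or_lt_of_le ht.1 with h | h
    · exfalso; apply h0; rw [hp', ← h]; norm_num
    · exact h
  exact ⟨(i, c, t), hc, ⟨ht0, ht.2⟩, hp'⟩

open Classical in
/-- Canonical coordinates `(i, c, t)` of a nonzero fan point. -/
noncomputable def fanRep (p : ℝ × ℝ) : ℕ × ℝ × ℝ :=
  if h : ∃ r : ℕ × ℝ × ℝ, r.2.1 ∈ Kpiece r.1 ∧ r.2.2 ∈ Ioc (0:ℝ) 1 ∧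
      p = (r.2.2 * r.2.1, r.2.2 * (1/2) ^ r.1) then h.choose else (0, 0, 0)

lemma fanRep_spec {p : ℝ × ℝ} (hp : p ∈ 𝕊) (h0 : p ≠ (0,0)) :
    (fanRep p).2.1 ∈ Kpiece (fanRep p).1 ∧ (fanRep p).2.2 ∈ Ioc (0:ℝ) 1 ∧
      p = ((fanRep p).2.2 * (fanRep p).2.1, (fanRep p).2.2 * (1/2) ^ (fanRep p).1) := by
  have h := exists_rep hp h0
  rw [fanRep, dif_pos h]
  exact h.choose_spec

lemma fanRep_eq {i : ℕ} {c t : ℝ} (hc : c ∈ Kpiece i) (ht : t ∈ Ioc (0:ℝ) 1) :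
    fanRep ((t * c, t * (1/2) ^ i) : ℝ × ℝ) = (i, c, t) := by
  have hmem : ((t * c, t * (1/2) ^ i) : ℝ × ℝ) ∈ 𝕊 := fan_pt_mem hc ⟨le_of_lt ht.1, ht.2⟩
  have h0 : ((t * c, t * (1/2) ^ i) : ℝ × ℝ) ≠ (0,0) := fan_pt_ne_zero ht.1
  obtain ⟨h1, h2, h3⟩ := fanRep_spec hmem h0
  obtain ⟨hi, hcc, htt⟩ := repr_unique h1 hc h2.1 ht.1 h3.symm
  ext
  · exact hi
  · exact hcc
  · exact htt

/-! ### Gate neighbourhoods for the pieces -/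

/-- Lower gate for the ratio of piece `i`. -/
def Lgate : ℕ → ℝ
  | 0 => -1
  | (i+1) => 2 ^ i

lemma gate_lb {i : ℕ} {c : ℝ} (hc : c ∈ Kpiece i) : Lgate i < c * 2 ^ i := by
  cases i with
  | zero =>
    have := Kpiece_nonneg hc
    simp only [Lgate, pow_zero, mul_one]
    linarith
  | succ i => exact ratio_lb' hc (by omega)

/-- The gate set of piece `i`: an open subset of the plane. -/
def gateSet (i : ℕ) : Set (ℝ × ℝ) :=
  {q | 0 < q.2 ∧ Lgate i * q.2 < q.1 ∧ q.1 < 2 ^ i * q.2}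

lemma isOpen_gateSet (i : ℕ) : IsOpen (gateSet i) := by
  apply IsOpen.inter (isOpen_lt continuous_const continuous_snd)
  exact IsOpen.inter (isOpen_lt (continuous_const.mul continuous_snd) continuous_fst)
    (isOpen_lt continuous_fst (continuous_const.mul continuous_snd))

lemma pt_fst_eq {i : ℕ} {c t : ℝ} :
    t * c = (t * (1/2:ℝ)^i) * (c * 2 ^ i) := by
  have h : ((1:ℝ)/2)^i * 2^i = 1 := by rw [← mul_pow]; norm_num
  calc t * c = t * c * (((1:ℝ)/2)^i * 2^i) := by rw [h, mul_one]
  _ = (t * (1/2:ℝ)^i) * (c * 2 ^ i) := by ring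

lemma mem_gateSet_of_rep {i : ℕ} {c t : ℝ} (hc : c ∈ Kpiece i) (ht : 0 < t) :
    ((t * c, t * (1/2) ^ i) : ℝ × ℝ) ∈ gateSet i := by
  have hy : 0 < t * (1/2:ℝ)^i := fan_pt_snd_pos ht
  refine ⟨hy, ?_, ?_⟩
  · show Lgate i * (t * (1/2:ℝ)^i) < t * c
    have h1 := mul_lt_mul_of_pos_left (gate_lb hc) hy
    have h2 := pt_fst_eq (i := i) (c := c) (t := t)
    linarith
  · show t * c < (2:ℝ) ^ i * (t * (1/2:ℝ)^i)
    have h1 := mul_lt_mul_of_pos_left (ratio_ub' hc) hy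
    have h2 := pt_fst_eq (i := i) (c := c) (t := t)
    linarith

/-- Within the fan, the gate set of `i` captures exactly piece `i`. -/
lemma rep_of_mem_gateSet {i : ℕ} {q : ℝ × ℝ} (hq : q ∈ 𝕊) (hgate : q ∈ gateSet i) :
    ∃ c t, c ∈ Kpiece i ∧ t ∈ Ioc (0:ℝ) 1 ∧ q = (t * c, t * (1/2) ^ i) := by
  obtain ⟨hy, hl, hu⟩ := hgate
  have h0 : q ≠ (0,0) := by
    intro h
    rw [h] at hy
    exact lt_irrefl 0 hy
  obtain ⟨⟨i', c, t⟩, hc, ht, hp⟩ := exists_rep hq h0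
  simp only at hc ht hp
  have hy' : q.2 = t * (1/2:ℝ)^i' := by rw [hp]
  have hx' : q.1 = (t * (1/2:ℝ)^i') * (c * 2 ^ i') := by rw [hp]; exact pt_fst_eq
  have hypos : 0 < t * (1/2:ℝ)^i' := fan_pt_snd_pos ht.1
  -- the gates imply Lgate i < c * 2 ^ i' < 2 ^ i
  have hgl : Lgate i < c * 2 ^ i' := by
    rw [hx', hy'] at hl
    have hl' : (t * (1/2:ℝ)^i') * Lgate i < (t * (1/2:ℝ)^i') * (c * 2 ^ i') := by linarith
    exact lt_of_mul_lt_mul_left hl' (le_of_lt hypos)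
  have hgu : c * 2 ^ i' < 2 ^ i := by
    rw [hx', hy'] at hu
    have hu' : (t * (1/2:ℝ)^i') * (c * 2 ^ i') < (t * (1/2:ℝ)^i') * (2:ℝ) ^ i := by linarith
    exact lt_of_mul_lt_mul_left hu' (le_of_lt hypos)
  have hii : i' = i := by
    rcases lt_trichotomy i' i with hlt | heq | hgt
    · exfalso
      -- then i ≥ 1 and c * 2 ^ i' < 2 ^ i' ≤ 2 ^ (i - 1) = Lgate i
      have hi1 : 1 ≤ i := by omega
      have hub : c * 2 ^ i' < (2:ℝ) ^ i' := ratio_ub' hc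
      have hle : (2:ℝ) ^ i' ≤ 2 ^ (i - 1) := pow_le_pow_right₀ (by norm_num) (by omega)
      have hLg : Lgate i = (2:ℝ) ^ (i - 1) := by
        cases i with
        | zero => omega
        | succ k => simp [Lgate]
      rw [hLg] at hgl
      linarith
    · exact heq
    · exfalso
      have hlb : (2:ℝ) ^ (i' - 1) < c * 2 ^ i' := ratio_lb' hc (by omega)
      have hle : (2:ℝ) ^ i ≤ 2 ^ (i' - 1) := pow_le_pow_right₀ (by norm_num) (by omega)
      linarith
  subst hii
  exact ⟨c, t, hc, ht, hp⟩

/-! ### Self-maps of the fan from piece data -/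

lemma half_pow_mul (k : ℕ) : ((1:ℝ)/2) ^ k * 2 ^ k = 1 := by
  rw [← mul_pow]; norm_num

lemma Kpiece_ge_twothird {i : ℕ} {c : ℝ} (hc : c ∈ Kpiece i) (hi : 1 ≤ i) : 2/3 ≤ c := by
  have h := hc.2.1
  have h3 : (0:ℝ) < 3 ^ i := by positivity
  rw [div_le_iff₀ h3] at h
  have h9 : (3:ℝ) ≤ 3 ^ i := by
    calc (3:ℝ) = 3 ^ 1 := (pow_one 3).symm
    _ ≤ 3 ^ i := pow_le_pow_right₀ (by norm_num) hi
  nlinarith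

/-- Data for a self-homeomorphism of the shrinking Cantor fan. -/
structure FanHom where
  σ : ℕ → ℕ
  ψ : ℕ → ℝ → ℝ
  ρ : ℝ → ℝ
  hψmem : ∀ k, ∀ c ∈ Kpiece k, ψ k c ∈ Kpiece (σ k)
  hψcont : ∀ k, ContinuousOn (ψ k) (Kpiece k)
  hρ0 : ρ 0 = 0
  hρmem : ∀ s ∈ Ioc (0:ℝ) 1, ρ s ∈ Ioc (0:ℝ) 1
  hρcont : ContinuousOn ρ (Icc 0 1)

namespace FanHom

noncomputable def toFun (F : FanHom) (p : ℝ × ℝ) : ℝ × ℝ :=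
  if p = ((0,0) : ℝ × ℝ) then (0,0) else
    (F.ρ (fanRep p).2.2 * F.ψ (fanRep p).1 (fanRep p).2.1,
     F.ρ (fanRep p).2.2 * (1/2) ^ (F.σ (fanRep p).1))

lemma toFun_zero (F : FanHom) : F.toFun ((0,0) : ℝ × ℝ) = (0,0) := if_pos rfl

lemma toFun_rep (F : FanHom) {i : ℕ} {c t : ℝ} (hc : c ∈ Kpiece i) (ht : t ∈ Ioc (0:ℝ) 1) :
    F.toFun ((t * c, t * (1/2) ^ i) : ℝ × ℝ)
      = (F.ρ t * F.ψ i c, F.ρ t * (1/2) ^ (F.σ i)) := by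
  rw [toFun, if_neg (fan_pt_ne_zero ht.1), fanRep_eq hc ht]

lemma toFun_mem (F : FanHom) {p : ℝ × ℝ} (hp : p ∈ 𝕊) : F.toFun p ∈ 𝕊 := by
  by_cases h0 : p = (0,0)
  · rw [h0, toFun_zero]; exact zero_mem_fan
  · obtain ⟨⟨i, c, t⟩, hc, ht, hp'⟩ := exists_rep hp h0
    simp only at hc ht hp'
    rw [hp', toFun_rep F hc ht]
    have h1 := F.hψmem i c hc
    have h2 := F.hρmem t ht
    exact fan_pt_mem h1 ⟨le_of_lt h2.1, h2.2⟩

lemma comp_eq_id (F G : FanHom) (hσ : ∀ k, G.σ (F.σ k) = k)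
    (hψ : ∀ k, ∀ c ∈ Kpiece k, G.ψ (F.σ k) (F.ψ k c) = c)
    (hρ : ∀ s ∈ Ioc (0:ℝ) 1, G.ρ (F.ρ s) = s) :
    ∀ p ∈ 𝕊, G.toFun (F.toFun p) = p := by
  intro p hp
  by_cases h0 : p = (0,0)
  · rw [h0, toFun_zero, toFun_zero]
  · obtain ⟨⟨i, c, t⟩, hc, ht, hp'⟩ := exists_rep hp h0
    simp only at hc ht hp'
    rw [hp', toFun_rep F hc ht,
      toFun_rep G (F.hψmem i c hc) (F.hρmem t ht), hσ i, hψ i c hc, hρ t ht]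

lemma dist_lb {i : ℕ} {c t : ℝ} (hc : c ∈ Kpiece i) (ht : 0 ≤ t) :
    2/3 * t ≤ dist ((t * c, t * (1/2) ^ i) : ℝ × ℝ) ((0,0) : ℝ × ℝ) := by
  rw [Prod.dist_eq]
  simp only [Real.dist_eq, sub_zero]
  cases Nat.eq_zero_or_pos i with
  | inl h =>
    subst h
    apply le_trans _ (le_max_right _ _)
    rw [pow_zero, mul_one, abs_of_nonneg ht]
    linarith
  | inr h =>
    apply le_trans _ (le_max_left _ _)
    rw [abs_of_nonneg (mul_nonneg ht (Kpiece_nonneg hc))]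
    nlinarith [Kpiece_ge_twothird hc h]

lemma dist_ub {i : ℕ} {c t : ℝ} (hc : c ∈ Kpiece i) (ht0 : 0 ≤ t) (ht1 : t ≤ 1) :
    dist ((t * c, t * (1/2) ^ i) : ℝ × ℝ) ((0,0) : ℝ × ℝ) ≤ t := by
  rw [Prod.dist_eq]
  simp only [Real.dist_eq, sub_zero]
  have hc0 := Kpiece_nonneg hc
  have hc1 := Kpiece_le_one hc
  have hh0 : (0:ℝ) ≤ (1/2:ℝ)^i := by positivity
  have hh1 : ((1:ℝ)/2)^i ≤ 1 := pow_le_one₀ (by norm_num) (by norm_num)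
  apply max_le
  · rw [abs_of_nonneg (by positivity)]; nlinarith
  · rw [abs_of_nonneg (by positivity)]; nlinarith

lemma continuousOn (F : FanHom) : ContinuousOn F.toFun 𝕊 := by
  intro p hp
  by_cases h0 : p = (0,0)
  · -- continuity at the vertex
    subst h0
    rw [Metric.continuousWithinAt_iff]
    intro ε hε
    have hcw : ContinuousWithinAt F.ρ (Icc 0 1) 0 :=
      F.hρcont 0 ⟨le_refl 0, zero_le_one⟩
    rw [Metric.continuousWithinAt_iff] at hcw
    obtain ⟨δ', hδ', hδ⟩ := hcw ε hε
    refine ⟨min 1 (2/3 * δ'), by positivity, ?_⟩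
    intro q hq hdist
    by_cases hq0 : q = (0,0)
    · rw [hq0, toFun_zero]
      simpa using hε
    · obtain ⟨⟨i, c, t⟩, hc, ht, hq'⟩ := exists_rep hq hq0
      simp only at hc ht hq'
      subst hq'
      rw [toFun_rep F hc ht, toFun_zero]
      have hlb := dist_lb hc (le_of_lt ht.1)
      have htlt : dist t 0 < δ' := by
        rw [Real.dist_eq, sub_zero, abs_of_nonneg (le_of_lt ht.1)]
        have h1 : dist ((t * c, t * (1/2) ^ i) : ℝ × ℝ) ((0,0) : ℝ × ℝ) < 2/3 * δ' :=
          lt_of_lt_of_le hdist (min_le_right _ _)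
        linarith
      have hρlt := hδ ⟨le_of_lt ht.1, ht.2⟩ htlt
      rw [Real.dist_eq, F.hρ0, sub_zero] at hρlt
      have hρt := F.hρmem t ht
      calc dist ((F.ρ t * F.ψ i c, F.ρ t * (1/2) ^ F.σ i) : ℝ × ℝ) ((0,0) : ℝ × ℝ)
          ≤ F.ρ t := dist_ub (F.hψmem i c hc) (le_of_lt hρt.1) hρt.2
      _ ≤ |F.ρ t| := le_abs_self _
      _ < ε := hρlt
  · -- continuity away from the vertex
    obtain ⟨⟨i, c, t⟩, hc, ht, hp'⟩ := exists_rep hp h0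
    simp only at hc ht hp'
    subst hp'
    set p : ℝ × ℝ := (t * c, t * (1/2) ^ i) with hpdef
    have hgate : p ∈ gateSet i := mem_gateSet_of_rep hc ht.1
    have hnhds : gateSet i ∈ nhds p := (isOpen_gateSet i).mem_nhds hgate
    rw [← continuousWithinAt_inter hnhds]
    -- the coordinates of points in the gate
    have hcoord : ∀ q ∈ 𝕊 ∩ gateSet i,
        ∃ c' t', c' ∈ Kpiece i ∧ t' ∈ Ioc (0:ℝ) 1 ∧ q = (t' * c', t' * (1/2)^i) ∧
          q.2 * 2 ^ i = t' ∧ q.1 * (1/2) ^ i / q.2 = c' := by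
      rintro q ⟨hq, hqg⟩
      obtain ⟨c', t', hc', ht', hq'⟩ := rep_of_mem_gateSet hq hqg
      refine ⟨c', t', hc', ht', hq', ?_, ?_⟩
      · rw [hq']
        show t' * (1/2:ℝ)^i * 2 ^ i = t'
        rw [mul_assoc, half_pow_mul, mul_one]
      · rw [hq']
        show t' * c' * (1/2:ℝ)^i / (t' * (1/2)^i) = c'
        rw [div_eq_iff (ne_of_gt (fan_pt_snd_pos ht'.1))]
        ring
    set g : ℝ × ℝ → ℝ × ℝ := fun q =>
      (F.ρ (q.2 * 2 ^ i) * F.ψ i (q.1 * (1/2) ^ i / q.2),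
       F.ρ (q.2 * 2 ^ i) * (1/2) ^ (F.σ i)) with hgdef
    have hp2 : p.2 = t * (1/2:ℝ)^i := rfl
    have hp2pos : 0 < p.2 := fan_pt_snd_pos ht.1
    have hpt : p.2 * 2 ^ i = t := by
      rw [hp2, mul_assoc, half_pow_mul, mul_one]
    have hpc : p.1 * (1/2) ^ i / p.2 = c := by
      show t * c * (1/2:ℝ)^i / (t * (1/2)^i) = c
      rw [div_eq_iff (ne_of_gt (fan_pt_snd_pos ht.1))]
      ring
    have hgcont : ContinuousWithinAt g (𝕊 ∩ gateSet i) p := by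
      have hinnerT : ContinuousWithinAt (fun q : ℝ × ℝ => q.2 * 2 ^ i) (𝕊 ∩ gateSet i) p :=
        (continuous_snd.mul continuous_const).continuousWithinAt
      have hmapsT : MapsTo (fun q : ℝ × ℝ => q.2 * 2 ^ i) (𝕊 ∩ gateSet i) (Icc (0:ℝ) 1) := by
        intro q hq
        obtain ⟨c', t', _, ht', _, hqt, _⟩ := hcoord q hq
        show q.2 * 2 ^ i ∈ Icc (0:ℝ) 1
        rw [hqt]
        exact ⟨le_of_lt ht'.1, ht'.2⟩
      have hρcwa : ContinuousWithinAt (fun q : ℝ × ℝ => F.ρ (q.2 * 2 ^ i)) (𝕊 ∩ gateSet i) p := by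
        have h1 := F.hρcont (p.2 * 2 ^ i) (by rw [hpt]; exact ⟨le_of_lt ht.1, ht.2⟩)
        exact ContinuousWithinAt.comp (g := F.ρ) (f := fun q : ℝ × ℝ => q.2 * 2 ^ i)
          (x := p) h1 hinnerT hmapsT
      have hinnerC : ContinuousWithinAt (fun q : ℝ × ℝ => q.1 * (1/2) ^ i / q.2)
          (𝕊 ∩ gateSet i) p :=
        (((continuous_fst.continuousAt (x := p)).mul continuousAt_const).div
          (continuous_snd.continuousAt) (ne_of_gt hp2pos)).continuousWithinAt
      have hmapsC : MapsTo (fun q : ℝ × ℝ => q.1 * (1/2) ^ i / q.2) (𝕊 ∩ gateSet i)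
          (Kpiece i) := by
        intro q hq
        obtain ⟨c', t', hc', _, _, _, hqc⟩ := hcoord q hq
        show q.1 * (1/2) ^ i / q.2 ∈ Kpiece i
        rw [hqc]
        exact hc'
      have hψcwa : ContinuousWithinAt (fun q : ℝ × ℝ => F.ψ i (q.1 * (1/2) ^ i / q.2))
          (𝕊 ∩ gateSet i) p := by
        have h1 := F.hψcont i (p.1 * (1/2) ^ i / p.2) (by rw [hpc]; exact hc)
        exact ContinuousWithinAt.comp (g := F.ψ i) (f := fun q : ℝ × ℝ => q.1 * (1/2) ^ i / q.2)
          (x := p) h1 hinnerC hmapsC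
      exact (hρcwa.mul hψcwa).prodMk (hρcwa.mul continuousWithinAt_const)
    apply hgcont.congr
    · intro q hq
      obtain ⟨c', t', hc', ht', hq', hqt, hqc⟩ := hcoord q hq
      rw [hq'] at hqt hqc ⊢
      rw [toFun_rep F hc' ht']
      simp only [hgdef]
      rw [hqt, hqc]
    · rw [toFun_rep F hc ht]
      simp only [hgdef]
      rw [hpt, hpc]

/-- Restriction of a fan self-map to the fan as a subtype. -/
noncomputable def restrict (F : FanHom) : ↥𝕊 → ↥𝕊 :=
  fun x => ⟨F.toFun x.1, F.toFun_mem x.2⟩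

lemma continuous_restrict (F : FanHom) : Continuous F.restrict :=
  Continuous.subtype_mk F.continuousOn.restrict _

end FanHom

/-- Build a self-homeomorphism of the fan from a pair of mutually inverse `FanHom`s. -/
noncomputable def fanHomeo (F G : FanHom) (hGF : ∀ p ∈ 𝕊, G.toFun (F.toFun p) = p)
    (hFG : ∀ p ∈ 𝕊, F.toFun (G.toFun p) = p) : ↥𝕊 ≃ₜ ↥𝕊 where
  toFun := F.restrict
  invFun := G.restrict
  left_inv x := Subtype.ext (hGF x.1 x.2)
  right_inv x := Subtype.ext (hFG x.1 x.2)
  continuous_toFun := F.continuous_restrict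
  continuous_invFun := G.continuous_restrict

/-! ### Concrete fan self-homeomorphisms -/

open Classical in
/-- Extend a map between subsets of `ℝ` to all of `ℝ`. -/
noncomputable def subMap {A B : Set ℝ} (φ : ↥A → ↥B) : ℝ → ℝ :=
  fun x => if h : x ∈ A then (φ ⟨x, h⟩ : ℝ) else x

lemma subMap_apply {A B : Set ℝ} (φ : ↥A → ↥B) {c : ℝ} (hc : c ∈ A) :
    subMap φ c = (φ ⟨c, hc⟩ : ℝ) := by rw [subMap, dif_pos hc]

lemma subMap_mem {A B : Set ℝ} (φ : ↥A → ↥B) {c : ℝ} (hc : c ∈ A) : subMap φ c ∈ B := by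
  rw [subMap_apply φ hc]; exact (φ ⟨c, hc⟩).2

lemma subMap_cont {A B : Set ℝ} (φ : ↥A → ↥B) (hφ : Continuous φ) :
    ContinuousOn (subMap φ) A := by
  rw [continuousOn_iff_continuous_restrict]
  have h : A.domRestrict (subMap φ) = fun x => (φ x : ℝ) := by
    funext x
    rw [restrict_apply, subMap, dif_pos x.2]
  rw [h]
  exact continuous_subtype_val.comp hφ

lemma subMap_symm_subMap {i j : ℕ} (φ : ↥(Kpiece i) ≃ₜ ↥(Kpiece j)) {c : ℝ}
    (hc : c ∈ Kpiece i) : subMap ⇑φ.symm (subMap ⇑φ c) = c := by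
  rw [subMap_apply ⇑φ hc]
  have hmem : ((φ ⟨c, hc⟩ : ↥(Kpiece j)) : ℝ) ∈ Kpiece j := (φ ⟨c, hc⟩).2
  rw [subMap_apply ⇑φ.symm hmem]
  have h1 : (⟨((φ ⟨c, hc⟩ : ↥(Kpiece j)) : ℝ), hmem⟩ : ↥(Kpiece j)) = φ ⟨c, hc⟩ :=
    Subtype.ext rfl
  rw [h1, Homeomorph.symm_apply_apply]

lemma subMap_subMap_symm {i j : ℕ} (φ : ↥(Kpiece i) ≃ₜ ↥(Kpiece j)) {c : ℝ}
    (hc : c ∈ Kpiece j) : subMap ⇑φ (subMap ⇑φ.symm c) = c := by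
  rw [subMap_apply ⇑φ.symm hc]
  have hmem : ((φ.symm ⟨c, hc⟩ : ↥(Kpiece i)) : ℝ) ∈ Kpiece i := (φ.symm ⟨c, hc⟩).2
  rw [subMap_apply ⇑φ hmem]
  have h1 : (⟨((φ.symm ⟨c, hc⟩ : ↥(Kpiece i)) : ℝ), hmem⟩ : ↥(Kpiece i)) = φ.symm ⟨c, hc⟩ :=
    Subtype.ext rfl
  rw [h1, Homeomorph.apply_symm_apply]

/-- `FanHom` swapping pieces `i` and `j` via `φ`, with radial reparametrisation `ρ`. -/
noncomputable def swapFanHom (i j : ℕ) (φ : ↥(Kpiece i) ≃ₜ ↥(Kpiece j)) (ρ : ℝ → ℝ)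
    (hρ0 : ρ 0 = 0) (hρmem : ∀ s ∈ Ioc (0:ℝ) 1, ρ s ∈ Ioc (0:ℝ) 1)
    (hρcont : ContinuousOn ρ (Icc 0 1)) : FanHom where
  σ := fun k => Equiv.swap i j k
  ψ := fun k => if k = i then subMap ⇑φ else if k = j then subMap ⇑φ.symm else id
  ρ := ρ
  hψmem := by
    intro k c hc
    show (if k = i then subMap ⇑φ else if k = j then subMap ⇑φ.symm else id) c
      ∈ Kpiece (Equiv.swap i j k)
    by_cases h1 : k = i
    · rw [if_pos h1, h1, Equiv.swap_apply_left]
      exact subMap_mem ⇑φ (h1 ▸ hc)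
    · by_cases h2 : k = j
      · rw [if_neg h1, if_pos h2, h2, Equiv.swap_apply_right]
        exact subMap_mem ⇑φ.symm (h2 ▸ hc)
      · rw [if_neg h1, if_neg h2, Equiv.swap_apply_of_ne_of_ne h1 h2]
        exact hc
  hψcont := by
    intro k
    show ContinuousOn (if k = i then subMap ⇑φ else if k = j then subMap ⇑φ.symm else id)
      (Kpiece k)
    by_cases h1 : k = i
    · rw [if_pos h1, h1]
      exact subMap_cont ⇑φ φ.continuous
    · by_cases h2 : k = j
      · rw [if_neg h1, if_pos h2, h2]
        exact subMap_cont ⇑φ.symm φ.symm.continuous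
      · rw [if_neg h1, if_neg h2]
        exact continuousOn_id
  hρ0 := hρ0
  hρmem := hρmem
  hρcont := hρcont

/-- The inverse data: swaps `j` and `i` via `φ.symm`. -/
noncomputable def swapFanHomInv (i j : ℕ) (φ : ↥(Kpiece i) ≃ₜ ↥(Kpiece j)) (ρ' : ℝ → ℝ)
    (hρ0 : ρ' 0 = 0) (hρmem : ∀ s ∈ Ioc (0:ℝ) 1, ρ' s ∈ Ioc (0:ℝ) 1)
    (hρcont : ContinuousOn ρ' (Icc 0 1)) : FanHom where
  σ := fun k => Equiv.swap i j k
  ψ := fun k => if k = j then subMap ⇑φ.symm else if k = i then subMap ⇑φ else id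
  ρ := ρ'
  hψmem := by
    intro k c hc
    show (if k = j then subMap ⇑φ.symm else if k = i then subMap ⇑φ else id) c
      ∈ Kpiece (Equiv.swap i j k)
    by_cases h2 : k = j
    · rw [if_pos h2, h2, Equiv.swap_apply_right]
      exact subMap_mem ⇑φ.symm (h2 ▸ hc)
    · by_cases h1 : k = i
      · rw [if_neg h2, if_pos h1, h1, Equiv.swap_apply_left]
        exact subMap_mem ⇑φ (h1 ▸ hc)
      · rw [if_neg h2, if_neg h1, Equiv.swap_apply_of_ne_of_ne h1 h2]
        exact hc
  hψcont := by
    intro k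
    show ContinuousOn (if k = j then subMap ⇑φ.symm else if k = i then subMap ⇑φ else id)
      (Kpiece k)
    by_cases h2 : k = j
    · rw [if_pos h2, h2]
      exact subMap_cont ⇑φ.symm φ.symm.continuous
    · by_cases h1 : k = i
      · rw [if_neg h2, if_pos h1, h1]
        exact subMap_cont ⇑φ φ.continuous
      · rw [if_neg h2, if_neg h1]
        exact continuousOn_id
  hρ0 := hρ0
  hρmem := hρmem
  hρcont := hρcont

/-- Main transitivity tool: a self-homeomorphism of the fan moving `(i,c,t)` to `(j,c',t')`. -/
lemma exists_fanHomeo {i j : ℕ} {c c' t t' : ℝ} (hc : c ∈ Kpiece i) (hc' : c' ∈ Kpiece j)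
    (ht : t ∈ Ioc (0:ℝ) 1) (ht' : t' ∈ Ioc (0:ℝ) 1) (ρ ρ' : ℝ → ℝ)
    (hρ0 : ρ 0 = 0) (hρmem : ∀ s ∈ Ioc (0:ℝ) 1, ρ s ∈ Ioc (0:ℝ) 1)
    (hρcont : ContinuousOn ρ (Icc 0 1))
    (hρ'0 : ρ' 0 = 0) (hρ'mem : ∀ s ∈ Ioc (0:ℝ) 1, ρ' s ∈ Ioc (0:ℝ) 1)
    (hρ'cont : ContinuousOn ρ' (Icc 0 1))
    (hρρ' : ∀ s ∈ Ioc (0:ℝ) 1, ρ' (ρ s) = s) (hρ'ρ : ∀ s ∈ Ioc (0:ℝ) 1, ρ (ρ' s) = s)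
    (hρt : ρ t = t') :
    ∃ h : ↥𝕊 ≃ₜ ↥𝕊,
      h ⟨((t * c, t * (1/2) ^ i) : ℝ × ℝ), fan_pt_mem hc ⟨le_of_lt ht.1, ht.2⟩⟩
        = ⟨((t' * c', t' * (1/2) ^ j) : ℝ × ℝ), fan_pt_mem hc' ⟨le_of_lt ht'.1, ht'.2⟩⟩ := by
  obtain ⟨φ, hφ⟩ := exists_pieceHomeo hc hc'
  set F := swapFanHom i j φ ρ hρ0 hρmem hρcont with hF
  set G := swapFanHomInv i j φ ρ' hρ'0 hρ'mem hρ'cont with hG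
  have hψGF : ∀ k, ∀ c₀ ∈ Kpiece k, G.ψ (F.σ k) (F.ψ k c₀) = c₀ := by
    intro k c₀ hc₀
    show (if Equiv.swap i j k = j then subMap ⇑φ.symm
        else if Equiv.swap i j k = i then subMap ⇑φ else id)
      ((if k = i then subMap ⇑φ else if k = j then subMap ⇑φ.symm else id) c₀) = c₀
    by_cases h1 : k = i
    · rw [if_pos h1, h1, Equiv.swap_apply_left, if_pos rfl]
      exact subMap_symm_subMap φ (h1 ▸ hc₀)
    · by_cases h2 : k = j
      · rw [if_neg h1, if_pos h2, h2, Equiv.swap_apply_right]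
        have hji : ¬ (i = j) := fun hh => h1 (h2.trans hh.symm)
        rw [if_neg hji, if_pos rfl]
        exact subMap_subMap_symm φ (h2 ▸ hc₀)
      · rw [if_neg h1, if_neg h2, Equiv.swap_apply_of_ne_of_ne h1 h2, if_neg h2, if_neg h1]
        rfl
  have hψFG : ∀ k, ∀ c₀ ∈ Kpiece k, F.ψ (G.σ k) (G.ψ k c₀) = c₀ := by
    intro k c₀ hc₀
    show (if Equiv.swap i j k = i then subMap ⇑φ
        else if Equiv.swap i j k = j then subMap ⇑φ.symm else id)
      ((if k = j then subMap ⇑φ.symm else if k = i then subMap ⇑φ else id) c₀) = c₀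
    by_cases h2 : k = j
    · rw [if_pos h2, h2, Equiv.swap_apply_right, if_pos rfl]
      exact subMap_subMap_symm φ (h2 ▸ hc₀)
    · by_cases h1 : k = i
      · rw [if_neg h2, if_pos h1, h1, Equiv.swap_apply_left]
        have hji : ¬ (j = i) := fun hh => h2 (h1.trans hh.symm)
        rw [if_neg hji, if_pos rfl]
        exact subMap_symm_subMap φ (h1 ▸ hc₀)
      · rw [if_neg h2, if_neg h1, Equiv.swap_apply_of_ne_of_ne h1 h2, if_neg h1, if_neg h2]
        rfl
  have hσ : ∀ k, G.σ (F.σ k) = k := fun k => Equiv.swap_apply_self i j k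
  have hσ' : ∀ k, F.σ (G.σ k) = k := fun k => Equiv.swap_apply_self i j k
  have hGF := FanHom.comp_eq_id F G hσ hψGF hρρ'
  have hFG := FanHom.comp_eq_id G F hσ' hψFG hρ'ρ
  refine ⟨fanHomeo F G hGF hFG, ?_⟩
  apply Subtype.ext
  show F.toFun ((t * c, t * (1/2) ^ i) : ℝ × ℝ) = ((t' * c', t' * (1/2) ^ j) : ℝ × ℝ)
  rw [FanHom.toFun_rep F hc ht]
  have hσi : F.σ i = j := Equiv.swap_apply_left i j
  have hψi : F.ψ i c = c' := by
    show (if i = i then subMap ⇑φ else if i = j then subMap ⇑φ.symm else id) c = c'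
    rw [if_pos rfl, subMap_apply ⇑φ hc, hφ]
  have hFρ : F.ρ = ρ := rfl
  rw [hσi, hψi, hFρ, hρt]

/-- Transitivity on endpoints. -/
lemma exists_homeo_endpoint {i j : ℕ} {c c' : ℝ} (hc : c ∈ Kpiece i) (hc' : c' ∈ Kpiece j)
    (x y : ↥𝕊) (hx : x.1 = ((c, (1/2) ^ i) : ℝ × ℝ)) (hy : y.1 = ((c', (1/2) ^ j) : ℝ × ℝ)) :
    ∃ h : ↥𝕊 ≃ₜ ↥𝕊, h x = y := by
  have h1 : (1:ℝ) ∈ Ioc (0:ℝ) 1 := ⟨one_pos, le_refl 1⟩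
  obtain ⟨h, hh⟩ := exists_fanHomeo hc hc' h1 h1 id id rfl (fun s hs => hs) continuousOn_id
    rfl (fun s hs => hs) continuousOn_id (fun s _ => rfl) (fun s _ => rfl) rfl
  refine ⟨h, ?_⟩
  have hx' : x = ⟨((1 * c, 1 * (1/2) ^ i) : ℝ × ℝ), fan_pt_mem hc ⟨le_of_lt h1.1, h1.2⟩⟩ := by
    apply Subtype.ext
    rw [hx]
    simp
  have hy' : y = ⟨((1 * c', 1 * (1/2) ^ j) : ℝ × ℝ), fan_pt_mem hc' ⟨le_of_lt h1.1, h1.2⟩⟩ := by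
    apply Subtype.ext
    rw [hy]
    simp
  rw [hx', hy']
  exact hh

/-- Transitivity on ordinary points. -/
lemma exists_homeo_ordinary {i j : ℕ} {c c' t t' : ℝ} (hc : c ∈ Kpiece i) (hc' : c' ∈ Kpiece j)
    (ht : t ∈ Ioo (0:ℝ) 1) (ht' : t' ∈ Ioo (0:ℝ) 1) (x y : ↥𝕊)
    (hx : x.1 = ((t * c, t * (1/2) ^ i) : ℝ × ℝ))
    (hy : y.1 = ((t' * c', t' * (1/2) ^ j) : ℝ × ℝ)) :
    ∃ h : ↥𝕊 ≃ₜ ↥𝕊, h x = y := by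
  set α := Real.log t' / Real.log t with hα_def
  have hlt : Real.log t < 0 := Real.log_neg ht.1 ht.2
  have hlt' : Real.log t' < 0 := Real.log_neg ht'.1 ht'.2
  have hα : 0 < α := div_pos_of_neg_of_neg hlt' hlt
  have hαinv : 0 < α⁻¹ := inv_pos.mpr hα
  set ρ : ℝ → ℝ := fun s => s ^ α with hρ_def
  set ρ' : ℝ → ℝ := fun s => s ^ α⁻¹ with hρ'_def
  have hρ0 : ρ 0 = 0 := Real.zero_rpow (ne_of_gt hα)
  have hρ'0 : ρ' 0 = 0 := Real.zero_rpow (ne_of_gt hαinv)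
  have hρmem : ∀ s ∈ Ioc (0:ℝ) 1, ρ s ∈ Ioc (0:ℝ) 1 := fun s hs =>
    ⟨Real.rpow_pos_of_pos hs.1 α, Real.rpow_le_one (le_of_lt hs.1) hs.2 (le_of_lt hα)⟩
  have hρ'mem : ∀ s ∈ Ioc (0:ℝ) 1, ρ' s ∈ Ioc (0:ℝ) 1 := fun s hs =>
    ⟨Real.rpow_pos_of_pos hs.1 α⁻¹, Real.rpow_le_one (le_of_lt hs.1) hs.2 (le_of_lt hαinv)⟩
  have hρcont : ContinuousOn ρ (Icc 0 1) := fun s _ =>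
    (Real.continuousAt_rpow_const s α (Or.inr (le_of_lt hα))).continuousWithinAt
  have hρ'cont : ContinuousOn ρ' (Icc 0 1) := fun s _ =>
    (Real.continuousAt_rpow_const s α⁻¹ (Or.inr (le_of_lt hαinv))).continuousWithinAt
  have hρρ' : ∀ s ∈ Ioc (0:ℝ) 1, ρ' (ρ s) = s := by
    intro s hs
    show (s ^ α) ^ α⁻¹ = s
    rw [← Real.rpow_mul (le_of_lt hs.1), mul_inv_cancel₀ (ne_of_gt hα), Real.rpow_one]
  have hρ'ρ : ∀ s ∈ Ioc (0:ℝ) 1, ρ (ρ' s) = s := by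
    intro s hs
    show (s ^ α⁻¹) ^ α = s
    rw [← Real.rpow_mul (le_of_lt hs.1), inv_mul_cancel₀ (ne_of_gt hα), Real.rpow_one]
  have hρt : ρ t = t' := by
    show t ^ α = t'
    rw [Real.rpow_def_of_pos ht.1, hα_def, mul_div_cancel₀ _ (ne_of_lt hlt), Real.exp_log ht'.1]
  obtain ⟨h, hh⟩ := exists_fanHomeo hc hc' ⟨ht.1, le_of_lt ht.2⟩ ⟨ht'.1, le_of_lt ht'.2⟩
    ρ ρ' hρ0 hρmem hρcont hρ'0 hρ'mem hρ'cont hρρ' hρ'ρ hρt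
  refine ⟨h, ?_⟩
  have hx' : x = ⟨((t * c, t * (1/2) ^ i) : ℝ × ℝ),
      fan_pt_mem hc ⟨le_of_lt ht.1, le_of_lt ht.2⟩⟩ := Subtype.ext hx
  have hy' : y = ⟨((t' * c', t' * (1/2) ^ j) : ℝ × ℝ),
      fan_pt_mem hc' ⟨le_of_lt ht'.1, le_of_lt ht'.2⟩⟩ := Subtype.ext hy
  rw [hx', hy']
  exact hh

/-! ### The Cantor set contains no interval -/

lemma cantorSet_no_interval {a b : ℝ} (hab : a < b) : ¬ (Icc a b ⊆ cantorSet) := by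
  intro hsub
  have key : ∀ n : ℕ, ∀ a b : ℝ, a < b → Icc a b ⊆ cantorSet → b - a ≤ (1/3)^n := by
    intro n
    induction n with
    | zero =>
      intro a b hab hsub
      have ha := cantorSet_mem_Icc (hsub ⟨le_refl a, le_of_lt hab⟩)
      have hb := cantorSet_mem_Icc (hsub ⟨le_of_lt hab, le_refl b⟩)
      simp only [pow_zero]
      linarith [ha.1, hb.2]
    | succ n ih =>
      intro a b hab hsub
      have ha : a ∈ cantorSet := hsub ⟨le_refl a, le_of_lt hab⟩
      have hb : b ∈ cantorSet := hsub ⟨le_of_lt hab, le_refl b⟩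
      rcases cantorSet_dichotomy ha with hA | hA
      · have hB : b ≤ 1/3 := by
          rcases cantorSet_dichotomy hb with h | h
          · exact h
          · exfalso
            have hmid : (1/2 : ℝ) ∈ Icc a b := ⟨by linarith, by linarith⟩
            have := cantorSet_dichotomy (hsub hmid)
            rcases this with h' | h' <;> linarith
        have hsub3 : Icc (3*a) (3*b) ⊆ cantorSet := by
          intro z hz
          have h1 : z / 3 ∈ Icc a b := ⟨by linarith [hz.1], by linarith [hz.2]⟩
          have h2 := hsub h1
          have h3 : z / 3 ≤ 1/3 := by linarith [h1.2]
          have := triple_mem_cantorSet_of_le h2 h3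
          rwa [show 3 * (z/3) = z by ring] at this
        have := ih (3*a) (3*b) (by linarith) hsub3
        rw [pow_succ]
        nlinarith
      · have hB : 2/3 ≤ a := hA
        have hsub3 : Icc (3*a - 2) (3*b - 2) ⊆ cantorSet := by
          intro z hz
          have h1 : (z + 2) / 3 ∈ Icc a b := ⟨by linarith [hz.1], by linarith [hz.2]⟩
          have h2 := hsub h1
          have h3 : 2/3 ≤ (z + 2)/3 := by linarith [h1.1]
          have := triple_sub_two_mem_cantorSet_of_ge h2 h3
          rwa [show 3 * ((z+2)/3) - 2 = z by ring] at this
        have := ih (3*a - 2) (3*b - 2) (by linarith) hsub3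
        rw [pow_succ]
        nlinarith
  obtain ⟨n, hn⟩ := exists_pow_lt_of_lt_one (show (0:ℝ) < b - a by linarith)
    (show (1:ℝ)/3 < 1 by norm_num)
  exact absurd (key n a b hab hsub) (not_le.mpr hn)

/-- A point of the Cantor set can be approximated from either side by points outside. -/
lemma exists_not_cantor_between {c η : ℝ} (hc : c ∈ cantorSet) (hη : 0 < η) :
    (∃ z, c - η ≤ z ∧ z < c ∧ z ∉ cantorSet) ∧ (∃ z, c < z ∧ z ≤ c + η ∧ z ∉ cantorSet) := by
  constructor
  · have := cantorSet_no_interval (show c - η < c by linarith)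
    rw [not_subset] at this
    obtain ⟨z, hz1, hz2⟩ := this
    exact ⟨z, hz1.1, lt_of_le_of_ne hz1.2 (fun h => hz2 (h ▸ hc)), hz2⟩
  · have := cantorSet_no_interval (show c < c + η by linarith)
    rw [not_subset] at this
    obtain ⟨z, hz1, hz2⟩ := this
    exact ⟨z, lt_of_le_of_ne hz1.1 (fun h => hz2 (h.symm ▸ hc)), hz1.2, hz2⟩

/-! ### Structure of connected subsets of the fan -/

/-- The ratio of a nonzero fan point recovers its blade. -/
lemma fan_ratio {i : ℕ} {c t : ℝ} (ht : 0 < t) :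
    (t * c) / (t * (1/2:ℝ)^i) = c * 2 ^ i := by
  rw [div_eq_iff (ne_of_gt (fan_pt_snd_pos ht))]
  linear_combination (-(c*t)) * half_pow_mul i

/-- No fan point has ratio exactly `2 ^ k`. -/
lemma fan_ratio_ne_pow {i k : ℕ} {c : ℝ} (hc : c ∈ Kpiece i) : c * 2 ^ i ≠ (2:ℝ) ^ k := by
  rcases le_or_gt i k with h | h
  · have h1 : c * 2 ^ i < (2:ℝ)^i := ratio_ub' hc
    have h2 : (2:ℝ)^i ≤ 2^k := pow_le_pow_right₀ (by norm_num) h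
    linarith
  · have h1 : (2:ℝ)^(i-1) < c * 2 ^ i := ratio_lb' hc (by omega)
    have h2 : (2:ℝ)^k ≤ 2^(i-1) := pow_le_pow_right₀ (by norm_num) (by omega)
    linarith

/-- A preconnected subset of the fan avoiding the vertex lies on a single blade. -/
lemma preconnected_subset_blade {A : Set (ℝ × ℝ)} (hA : A ⊆ 𝕊) (hconn : IsPreconnected A)
    (h0 : ((0,0) : ℝ × ℝ) ∉ A) {i : ℕ} {c t : ℝ} (hc : c ∈ Kpiece i) (ht : t ∈ Ioc (0:ℝ) 1)
    (hmem : ((t * c, t * (1/2) ^ i) : ℝ × ℝ) ∈ A) :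
    ∀ q ∈ A, ∃ s ∈ Ioc (0:ℝ) 1, q = ((s * c, s * (1/2) ^ i) : ℝ × ℝ) := by
  have hsnd : ∀ q ∈ A, 0 < q.2 := by
    intro q hq
    obtain ⟨⟨i', c', t'⟩, hc', ht', hq'⟩ := exists_rep (hA hq) (fun h => h0 (h ▸ hq))
    simp only at hq' hc' ht'
    rw [hq']
    exact fan_pt_snd_pos ht'.1
  -- the ratio map
  set r : ℝ × ℝ → ℝ := fun q => q.1 / q.2 with hr
  have hrcont : ContinuousOn r A :=
    ContinuousOn.div continuousOn_fst continuousOn_snd (fun q hq => ne_of_gt (hsnd q hq))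
  have hBconn : IsPreconnected (r '' A) := hconn.image r hrcont
  have hBord := hBconn.ordConnected
  have hval : ∀ q ∈ A, ∃ i' c' t', c' ∈ Kpiece i' ∧ t' ∈ Ioc (0:ℝ) 1 ∧
      q = ((t' * c', t' * (1/2) ^ i') : ℝ × ℝ) ∧ r q = c' * 2 ^ i' := by
    intro q hq
    obtain ⟨⟨i', c', t'⟩, hc', ht', hq'⟩ := exists_rep (hA hq) (fun h => h0 (h ▸ hq))
    simp only at hq' hc' ht'
    refine ⟨i', c', t', hc', ht', hq', ?_⟩
    rw [hq', hr]
    exact fan_ratio ht'.1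
  -- all points lie on piece i
  have hsamepiece : ∀ q ∈ A, ∃ c' t', c' ∈ Kpiece i ∧ t' ∈ Ioc (0:ℝ) 1 ∧
      q = ((t' * c', t' * (1/2) ^ i) : ℝ × ℝ) := by
    intro q hq
    obtain ⟨i', c', t', hc', ht', hq', hrq⟩ := hval q hq
    rcases lt_trichotomy i' i with hlt | heq | hgt
    · exfalso
      -- separator 2 ^ i' lies between the two ratio values and inside the image
      have h1 : r q = c' * 2 ^ i' := hrq
      have h2 : r ((t * c, t * (1/2) ^ i) : ℝ × ℝ) = c * 2 ^ i := fan_ratio ht.1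
      have hq_mem : r q ∈ r '' A := mem_image_of_mem r hq
      have hp_mem : c * 2 ^ i ∈ r '' A := h2 ▸ mem_image_of_mem r hmem
      have hlow : c' * 2 ^ i' < (2:ℝ)^i' := ratio_ub' hc'
      have hhigh : (2:ℝ)^i' ≤ 2^(i-1) := pow_le_pow_right₀ (by norm_num) (by omega)
      have hhigh2 : (2:ℝ)^(i-1) < c * 2^i := ratio_lb' hc (by omega)
      have hsep : (2:ℝ)^i' ∈ Icc (r q) (c * 2^i) := ⟨by rw [h1]; linarith, by linarith⟩
      have := hBord.out hq_mem hp_mem hsep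
      obtain ⟨q', hq', hq'eq⟩ := this
      obtain ⟨i'', c'', t'', hc'', _, _, hrq''⟩ := hval q' hq'
      rw [hq'eq] at hrq''
      exact fan_ratio_ne_pow hc'' hrq''.symm
    · exact ⟨c', t', heq ▸ hc', ht', heq ▸ hq'⟩
    · exfalso
      have h2 : r ((t * c, t * (1/2) ^ i) : ℝ × ℝ) = c * 2 ^ i := fan_ratio ht.1
      have hq_mem : r q ∈ r '' A := mem_image_of_mem r hq
      have hp_mem : c * 2 ^ i ∈ r '' A := h2 ▸ mem_image_of_mem r hmem
      have hlow : c * 2 ^ i < (2:ℝ)^i := ratio_ub' hc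
      have hhigh : (2:ℝ)^i ≤ 2^(i'-1) := pow_le_pow_right₀ (by norm_num) (by omega)
      have hhigh2 : (2:ℝ)^(i'-1) < c' * 2^i' := ratio_lb' hc' (by omega)
      have hsep : (2:ℝ)^i ∈ Icc (c * 2^i) (r q) := ⟨by linarith, by rw [hrq]; linarith⟩
      have := hBord.out hp_mem hq_mem hsep
      obtain ⟨q', hq', hq'eq⟩ := this
      obtain ⟨i'', c'', t'', hc'', _, _, hrq''⟩ := hval q' hq'
      rw [hq'eq] at hrq''
      exact fan_ratio_ne_pow hc'' hrq''.symm
  -- all points have the same Cantor coordinate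
  intro q hq
  obtain ⟨c', t', hc', ht', hq'⟩ := hsamepiece q hq
  suffices hcc : c' = c by
    exact ⟨t', ht', by rw [hq', hcc]⟩
  by_contra hne
  -- every element of the ratio image is a Cantor coordinate of piece i
  have h2i : (0:ℝ) < 2 ^ i := by positivity
  have hrA : ∀ s ∈ r '' A, s / 2^i ∈ cantorSet := by
    rintro s ⟨q', hq'', rfl⟩
    obtain ⟨c₃, t₃, hc₃, ht₃, hq₃⟩ := hsamepiece q' hq''
    have : r q' = c₃ * 2 ^ i := by rw [hq₃, hr]; exact fan_ratio ht₃.1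
    rw [this, mul_div_cancel_right₀ _ (ne_of_gt h2i)]
    exact hc₃.1
  have hq_mem : c' * 2^i ∈ r '' A := by
    have : r q = c' * 2 ^ i := by rw [hq', hr]; exact fan_ratio ht'.1
    exact this ▸ mem_image_of_mem r hq
  have hp_mem : c * 2 ^ i ∈ r '' A := by
    have : r ((t * c, t * (1/2) ^ i) : ℝ × ℝ) = c * 2 ^ i := fan_ratio ht.1
    exact this ▸ mem_image_of_mem r hmem
  -- hence an entire interval of the Cantor set, contradiction
  have hlohi : min c' c < max c' c := by
    rcases lt_or_gt_of_ne hne with h | h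
    · rw [min_eq_left (le_of_lt h), max_eq_right (le_of_lt h)]; exact h
    · rw [min_eq_right (le_of_lt h), max_eq_left (le_of_lt h)]; exact h
  apply cantorSet_no_interval hlohi
  intro u hu
  have humem : u * 2^i ∈ r '' A := by
    rcases le_total c' c with hle | hle
    · rw [min_eq_left hle, max_eq_right hle] at hu
      exact hBord.out hq_mem hp_mem
        ⟨by nlinarith [hu.1, hu.2], by nlinarith [hu.1, hu.2]⟩
    · rw [min_eq_right hle, max_eq_left hle] at hu
      exact hBord.out hp_mem hq_mem
        ⟨by nlinarith [hu.1, hu.2], by nlinarith [hu.1, hu.2]⟩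
  have := hrA _ humem
  rwa [mul_div_cancel_right₀ _ (ne_of_gt h2i)] at this

/-- A compact connected subset of the fan containing the vertex and a blade point
contains every lower point of that blade. -/
lemma compact_connected_contains {K : Set (ℝ × ℝ)} (hK : K ⊆ 𝕊) (hKc : IsCompact K)
    (hKpc : IsPreconnected K) (h0 : ((0,0) : ℝ × ℝ) ∈ K) {i : ℕ} {c t1 : ℝ}
    (hc : c ∈ Kpiece i) (ht1 : t1 ∈ Ioc (0:ℝ) 1)
    (hq : ((t1 * c, t1 * (1/2) ^ i) : ℝ × ℝ) ∈ K) :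
    ∀ t0 ∈ Ioo (0:ℝ) t1, ((t0 * c, t0 * (1/2) ^ i) : ℝ × ℝ) ∈ K := by
  intro t0 ht0
  by_contra hm
  set h : ℝ := (1/2:ℝ) ^ i with hh
  have hhpos : 0 < h := by positivity
  set m : ℝ × ℝ := (t0 * c, t0 * h) with hmdef
  have h2i : (0:ℝ) < 2 ^ i := by positivity
  -- distance from m to the slice of K at height t0 * h
  have hslice : ∃ ε > 0, ∀ q ∈ K, q.2 = t0 * h → ε ≤ dist m q := by
    set T := {q ∈ K | q.2 = t0 * h} with hT
    have hTclosed : IsClosed T :=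
      IsClosed.inter hKc.isClosed (isClosed_eq continuous_snd continuous_const)
    rcases T.eq_empty_or_nonempty with hTe | hTne
    · refine ⟨1, one_pos, ?_⟩
      intro q hq1 hq2
      exfalso
      have : q ∈ T := ⟨hq1, hq2⟩
      rw [hTe] at this
      exact this
    · have hmT : m ∉ T := fun hmem => hm hmem.1
      have hpos : 0 < infDist m T := by
        rw [← hTclosed.notMem_iff_infDist_pos hTne]
        exact hmT
      exact ⟨infDist m T, hpos, fun q hq1 hq2 => infDist_le_dist_of_mem ⟨hq1, hq2⟩⟩
  obtain ⟨ε, hεpos, hεprop⟩ := hslice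
  -- pick the window width
  have hgl : Lgate i < c * 2 ^ i := gate_lb hc
  have hgu : c * 2 ^ i < 2 ^ i := ratio_ub' hc
  set η : ℝ := min (ε / (2 * t0)) (min ((c * 2^i - Lgate i) / (2 * 2^i))
    ((2^i - c * 2^i) / (2 * 2^i))) with hη
  have h2t0 : (0:ℝ) < 2 * t0 := by linarith [ht0.1]
  have hηpos : 0 < η := by
    apply lt_min (div_pos hεpos h2t0)
    apply lt_min
    · apply div_pos (by linarith) (by positivity)
    · apply div_pos (by linarith) (by positivity)
  have hηε : t0 * η < ε := by
    have h1 : η ≤ ε / (2 * t0) := min_le_left _ _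
    have h4 : ε / (2 * t0) * (2 * t0) = ε := div_mul_cancel₀ ε (ne_of_gt h2t0)
    nlinarith [mul_le_mul_of_nonneg_right h1 (le_of_lt h2t0), h4, hεpos]
  have hηl : η * 2^i < c * 2^i - Lgate i := by
    have h1 : η ≤ (c * 2^i - Lgate i) / (2 * 2^i) := le_trans (min_le_right _ _) (min_le_left _ _)
    have h4 : (c * 2^i - Lgate i) / (2 * 2^i) * (2 * 2^i) = c * 2^i - Lgate i :=
      div_mul_cancel₀ _ (by positivity)
    nlinarith [mul_le_mul_of_nonneg_right h1 (le_of_lt (show (0:ℝ) < 2 * 2^i by positivity)),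
      h4, hgl]
  have hηu : η * 2^i < 2^i - c * 2^i := by
    have h1 : η ≤ (2^i - c * 2^i) / (2 * 2^i) := le_trans (min_le_right _ _) (min_le_right _ _)
    have h4 : (2^i - c * 2^i) / (2 * 2^i) * (2 * 2^i) = 2^i - c * 2^i :=
      div_mul_cancel₀ _ (by positivity)
    nlinarith [mul_le_mul_of_nonneg_right h1 (le_of_lt (show (0:ℝ) < 2 * 2^i by positivity)),
      h4, hgu]
  -- pick the window boundaries outside the Cantor set
  obtain ⟨⟨z, hz1, hz2, hz3⟩, ⟨z', hz'1, hz'2, hz'3⟩⟩ := exists_not_cantor_between hc.1 hηpos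
  -- the separation
  set U : Set (ℝ × ℝ) := {q | t0 * h < q.2 ∧ z * 2^i * q.2 < q.1 ∧ q.1 < z' * 2^i * q.2} with hU
  set V : Set (ℝ × ℝ) := {q | q.2 < t0 * h ∨ q.1 < z * 2^i * q.2 ∨ z' * 2^i * q.2 < q.1} with hV
  have hUopen : IsOpen U := by
    apply IsOpen.inter (isOpen_lt continuous_const continuous_snd)
    exact IsOpen.inter (isOpen_lt (continuous_const.mul continuous_snd) continuous_fst)
      (isOpen_lt continuous_fst (continuous_const.mul continuous_snd))
  have hVopen : IsOpen V := by
    apply IsOpen.union (isOpen_lt continuous_snd continuous_const)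
    exact IsOpen.union (isOpen_lt continuous_fst (continuous_const.mul continuous_snd))
      (isOpen_lt (continuous_const.mul continuous_snd) continuous_fst)
  -- K is covered
  have hcover : K ⊆ U ∪ V := by
    intro q hqK
    by_cases hqV : q ∈ V
    · exact Or.inr hqV
    · left
      rw [hV, mem_setOf_eq] at hqV
      push_neg at hqV
      obtain ⟨hq2, hq1l, hq1u⟩ := hqV
      have hq2pos : 0 < q.2 := lt_of_lt_of_le (mul_pos ht0.1 hhpos) hq2
      -- q is in the gate of piece i
      have hzl : Lgate i < z * 2^i := by
        nlinarith [mul_le_mul_of_nonneg_right hz1 (le_of_lt h2i), hηl]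
      have hzu : z' * 2^i < 2^i := by
        nlinarith [mul_le_mul_of_nonneg_right hz'2 (le_of_lt h2i), hηu]
      have hzgate : Lgate i * q.2 < q.1 := by
        calc Lgate i * q.2 < z * 2^i * q.2 := by nlinarith [hq2pos]
        _ ≤ q.1 := hq1l
      have hzgate2 : q.1 < 2^i * q.2 := by
        calc q.1 ≤ z' * 2^i * q.2 := hq1u
        _ < 2^i * q.2 := by nlinarith [hq2pos]
      obtain ⟨c'', s, hc'', hs, hqrep⟩ :=
        rep_of_mem_gateSet (hK hqK) ⟨hq2pos, hzgate, hzgate2⟩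
      have hq1eq : q.1 = q.2 * (c'' * 2 ^ i) := by
        rw [hqrep]
        exact pt_fst_eq
      have hq2eq : q.2 = s * h := by rw [hqrep]
      -- c'' lies strictly inside the window
      have hcz : z ≤ c'' := by
        have h5 : (z * 2^i) * q.2 ≤ (c'' * 2^i) * q.2 := by
          have := hq1l
          rw [hq1eq] at this
          linarith
        have h6 : z * 2^i ≤ c'' * 2^i := le_of_mul_le_mul_right h5 hq2pos
        have h7 : z * 2^i ≤ c'' * 2^i → z ≤ c'' := fun hh =>
          le_of_mul_le_mul_right (by linarith) h2i
        exact h7 h6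
      have hcz' : c'' ≤ z' := by
        have h5 : (c'' * 2^i) * q.2 ≤ (z' * 2^i) * q.2 := by
          have := hq1u
          rw [hq1eq] at this
          linarith
        have h6 : c'' * 2^i ≤ z' * 2^i := le_of_mul_le_mul_right h5 hq2pos
        exact le_of_mul_le_mul_right (by linarith) h2i
      have hczs : z < c'' := lt_of_le_of_ne hcz (fun hh => hz3 (hh ▸ hc''.1))
      have hcz's : c'' < z' := lt_of_le_of_ne hcz' (fun hh => hz'3 (hh.symm ▸ hc''.1))
      -- and q is strictly above the slice
      have hq2strict : t0 * h < q.2 := by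
        rcases eq_or_lt_of_le hq2 with heq | hlt
        · exfalso
          -- q is on the slice, hence at distance ≥ ε from m, yet within t0·η
          have hseq : s = t0 := by
            have : s * h = t0 * h := by rw [← hq2eq, ← heq]
            exact mul_right_cancel₀ (ne_of_gt hhpos) this
          have hdist : dist m q < ε := by
            rw [hqrep, hseq, hmdef, Prod.dist_eq]
            have hd2 : dist (t0 * h) (t0 * h) = 0 := dist_self _
            have hd1 : dist (t0 * c) (t0 * c'') = t0 * |c - c''| := by
              rw [Real.dist_eq, ← mul_sub, abs_mul, abs_of_nonneg (le_of_lt ht0.1)]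
            have hcc : |c - c''| < η := by
              rw [abs_lt]
              constructor <;> linarith
            show max (dist (t0 * c) (t0 * c'')) (dist (t0 * h) (t0 * h)) < ε
            rw [hd1, hd2]
            have : t0 * |c - c''| < t0 * η := mul_lt_mul_of_pos_left hcc ht0.1
            have hmax : max (t0 * |c - c''|) 0 = t0 * |c - c''| :=
              max_eq_left (mul_nonneg (le_of_lt ht0.1) (abs_nonneg _))
            rw [hmax]
            linarith
          have := hεprop q hqK heq.symm
          linarith
        · exact hlt
      refine ⟨hq2strict, ?_, ?_⟩
      · rw [hq1eq]
        have h8 : z * 2^i < c'' * 2^i := mul_lt_mul_of_pos_right hczs h2i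
        have h9 := mul_lt_mul_of_pos_right h8 hq2pos
        linarith
      · rw [hq1eq]
        have h8 : c'' * 2^i < z' * 2^i := mul_lt_mul_of_pos_right hcz's h2i
        have h9 := mul_lt_mul_of_pos_right h8 hq2pos
        linarith
  -- the two pieces are nonempty
  have hqU : ((t1 * c, t1 * (1/2) ^ i) : ℝ × ℝ) ∈ U := by
    have h2 : t0 * h < t1 * h := by nlinarith [ht0.2]
    refine ⟨h2, ?_, ?_⟩
    · show z * 2^i * (t1 * (1/2:ℝ)^i) < t1 * c
      have : z * 2^i * (t1 * (1/2:ℝ)^i) = z * t1 * (2^i * (1/2)^i) := by ring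
      rw [this, show (2:ℝ)^i * (1/2)^i = 1 by rw [mul_comm]; exact half_pow_mul i, mul_one]
      nlinarith [ht0.1, ht0.2, hz2]
    · show t1 * c < z' * 2^i * (t1 * (1/2:ℝ)^i)
      have : z' * 2^i * (t1 * (1/2:ℝ)^i) = z' * t1 * (2^i * (1/2)^i) := by ring
      rw [this, show (2:ℝ)^i * (1/2)^i = 1 by rw [mul_comm]; exact half_pow_mul i, mul_one]
      nlinarith [ht0.1, ht0.2, hz'1]
  have h0V : ((0,0) : ℝ × ℝ) ∈ V := by
    left
    show (0:ℝ) < t0 * h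
    exact mul_pos ht0.1 hhpos
  have hdisj : K ∩ (U ∩ V) = ∅ := by
    ext q
    simp only [mem_inter_iff, mem_empty_iff_false, iff_false]
    rintro ⟨_, ⟨hU1, hU2, hU3⟩, hV1⟩
    rcases hV1 with hh | hh | hh <;> linarith
  have := hKpc U V hUopen hVopen hcover ⟨_, hq, hqU⟩ ⟨_, h0, h0V⟩
  rw [hdisj] at this
  exact absurd this (by simp [Set.not_nonempty_empty])

/-! ### Blade arcs -/

/-- The set of blade points with parameter between `a` and `b`. -/
def bladeSet (i : ℕ) (c a b : ℝ) : Set ↥𝕊 :=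
  {x | ∃ s ∈ uIcc a b, (x : ℝ × ℝ) = ((s * c, s * (1/2) ^ i) : ℝ × ℝ)}

lemma uIcc_subset_unit {a b : ℝ} (ha : a ∈ Icc (0:ℝ) 1) (hb : b ∈ Icc (0:ℝ) 1) :
    uIcc a b ⊆ Icc (0:ℝ) 1 := by
  intro s hs
  rcases mem_uIcc.mp hs with ⟨h1, h2⟩ | ⟨h1, h2⟩
  · exact ⟨le_trans ha.1 h1, le_trans h2 hb.2⟩
  · exact ⟨le_trans hb.1 h1, le_trans h2 ha.2⟩

lemma isArcWith_bladeSet {i : ℕ} {c a b : ℝ} (hc : c ∈ Kpiece i)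
    (ha : a ∈ Icc (0:ℝ) 1) (hb : b ∈ Icc (0:ℝ) 1) (hab : a ≠ b)
    (xa xb : ↥𝕊) (hxa : (xa : ℝ × ℝ) = ((a * c, a * (1/2) ^ i) : ℝ × ℝ))
    (hxb : (xb : ℝ × ℝ) = ((b * c, b * (1/2) ^ i) : ℝ × ℝ)) :
    IsArcWith (bladeSet i c a b) xa xb := by
  have hba : b - a ≠ 0 := fun h => hab (by linarith [sub_eq_zero.mp h])
  have hhi : (0:ℝ) < (1/2:ℝ)^i := by positivity
  -- parameters of points of unitInterval
  have hparam : ∀ u : unitInterval, a + (u:ℝ) * (b - a) ∈ uIcc a b := by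
    intro u
    obtain ⟨hu0, hu1⟩ := u.2
    rw [mem_uIcc]
    rcases le_total a b with h | h
    · left; constructor <;> nlinarith
    · right; constructor <;> nlinarith
  have hmemIcc : ∀ u : unitInterval, a + (u:ℝ) * (b - a) ∈ Icc (0:ℝ) 1 :=
    fun u => uIcc_subset_unit ha hb (hparam u)
  set γ : unitInterval → ↥𝕊 := fun u =>
    ⟨(((a + (u:ℝ) * (b - a)) * c, (a + (u:ℝ) * (b - a)) * (1/2) ^ i) : ℝ × ℝ),
      fan_pt_mem hc (hmemIcc u)⟩ with hγ
  have hγA : ∀ u, γ u ∈ bladeSet i c a b := fun u => ⟨a + (u:ℝ) * (b - a), hparam u, rfl⟩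
  set e : unitInterval → ↥(bladeSet i c a b) := fun u => ⟨γ u, hγA u⟩ with he
  have hinj : Function.Injective e := by
    intro u u' huu
    have h2 : (a + (u:ℝ) * (b - a)) * (1/2:ℝ) ^ i = (a + (u':ℝ) * (b - a)) * (1/2) ^ i :=
      congrArg (fun x : ↥(bladeSet i c a b) => ((x : ↥𝕊) : ℝ × ℝ).2) huu
    have h3 : a + (u:ℝ) * (b - a) = a + (u':ℝ) * (b - a) := mul_right_cancel₀ (ne_of_gt hhi) h2
    have h4 : (u:ℝ) = (u':ℝ) := mul_right_cancel₀ hba (by linarith)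
    exact Subtype.ext h4
  have hsurj : Function.Surjective e := by
    rintro ⟨x, s, hs, hx⟩
    refine ⟨⟨(s - a)/(b - a), ?_⟩, ?_⟩
    · rcases mem_uIcc.mp hs with ⟨h1, h2⟩ | ⟨h1, h2⟩
      · have hab' : a < b := lt_of_le_of_ne (le_trans h1 h2) hab
        constructor
        · apply div_nonneg (by linarith) (by linarith)
        · rw [div_le_one (by linarith)]; linarith
      · have hab' : b < a := lt_of_le_of_ne (le_trans h1 h2) (Ne.symm hab)
        have heqd : (s - a)/(b - a) = (a - s)/(a - b) := by
          rw [div_eq_div_iff hba (sub_ne_zero.mpr hab)]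
          ring
        rw [heqd]
        constructor
        · exact div_nonneg (by linarith) (by linarith)
        · rw [div_le_one (by linarith)]; linarith
    · apply Subtype.ext
      apply Subtype.ext
      show ((γ ⟨(s - a)/(b - a), _⟩ : ↥𝕊) : ℝ × ℝ) = x
      rw [hγ]
      simp only
      rw [div_mul_cancel₀ _ hba, hx]
      norm_num
  set eq : unitInterval ≃ ↥(bladeSet i c a b) := Equiv.ofBijective e ⟨hinj, hsurj⟩ with heq
  have hcont : Continuous e := by
    apply Continuous.subtype_mk
    apply Continuous.subtype_mk
    apply Continuous.prodMk <;> fun_prop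
  refine ⟨Continuous.homeoOfEquivCompactToT2 (f := eq) hcont, ?_, ?_⟩
  · apply Subtype.ext
    show ((γ 0 : ↥𝕊) : ℝ × ℝ) = (xa : ℝ × ℝ)
    rw [hγ, hxa]
    norm_num
  · apply Subtype.ext
    show ((γ 1 : ↥𝕊) : ℝ × ℝ) = (xb : ℝ × ℝ)
    rw [hγ, hxb]
    norm_num

/-! ### Order of points in the fan -/

lemma Kpiece_base (l : ℕ) : ((3:ℝ) ^ l - 1) / 3 ^ l ∈ Kpiece l := by
  rw [Kpiece_eq_image]
  refine ⟨0, zero_mem_cantorSet, ?_⟩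
  show ((3:ℝ) ^ l - 1) / 3 ^ l + 0 / 3 ^ (l+1) = ((3:ℝ) ^ l - 1) / 3 ^ l
  rw [zero_div, add_zero]

/-- The vertex of the fan. -/
noncomputable def fanVertex : ↥𝕊 := ⟨((0,0) : ℝ × ℝ), zero_mem_fan⟩

lemma vertex_val_eq (i : ℕ) (c : ℝ) : ((0,0) : ℝ × ℝ) = ((0 * c, 0 * (1/2)^i) : ℝ × ℝ) := by
  norm_num

lemma snd_pos_of_rep {i : ℕ} {c s : ℝ} {x : ↥𝕊} (hx : (x : ℝ × ℝ) = (s * c, s * (1/2) ^ i))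
    (hs : 0 < s) : (0:ℝ) < (x : ℝ × ℝ).2 := by
  rw [hx]
  exact fan_pt_snd_pos hs

lemma orderGe_vertex_three : OrderGe ↥𝕊 fanVertex 3 := by
  set cc : Fin 3 → ℝ := fun l => ((3:ℝ) ^ (l:ℕ) - 1) / 3 ^ (l:ℕ) with hcc
  have hccK : ∀ l : Fin 3, cc l ∈ Kpiece (l:ℕ) := fun l => Kpiece_base (l:ℕ)
  refine ⟨fun l => bladeSet (l:ℕ) (cc l) 0 1, ?_, ?_⟩
  · intro l
    refine ⟨⟨((1 * cc l, 1 * (1/2) ^ (l:ℕ)) : ℝ × ℝ),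
      fan_pt_mem (hccK l) ⟨zero_le_one, le_refl 1⟩⟩, ?_⟩
    apply isArcWith_bladeSet (hccK l) ⟨le_refl 0, zero_le_one⟩ ⟨zero_le_one, le_refl 1⟩
      (by norm_num)
    · exact vertex_val_eq _ _
    · rfl
  · intro l m hlm
    have hvalne : (l : ℕ) ≠ (m : ℕ) := fun hh => hlm (Fin.ext hh)
    ext x
    simp only [mem_inter_iff, mem_singleton_iff]
    constructor
    · rintro ⟨⟨s, hs, hx⟩, ⟨s', hs', hx'⟩⟩
      rw [uIcc_of_le zero_le_one] at hs hs'
      rcases eq_or_lt_of_le hs.1 with h0 | h0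
      · apply Subtype.ext
        show (x : ℝ × ℝ) = ((0,0) : ℝ × ℝ)
        rw [hx, ← h0]
        norm_num
      · exfalso
        have hs'pos : 0 < s' := by
          have h2 : 0 < s' * (1/2:ℝ) ^ (m:ℕ) := by
            rw [show s' * (1/2:ℝ)^(m:ℕ) = ((x : ℝ × ℝ)).2 from by rw [hx']]
            rw [hx]
            exact fan_pt_snd_pos h0
          by_contra hcon
          push_neg at hcon
          nlinarith [pow_pos (show (0:ℝ) < 1/2 by norm_num) (m:ℕ)]
        have := repr_unique (hccK l) (hccK m) h0 hs'pos (by rw [← hx, ← hx'])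
        exact hvalne this.1
    · rintro rfl
      constructor
      · exact ⟨0, by rw [uIcc_of_le zero_le_one]; exact ⟨le_refl 0, zero_le_one⟩,
          vertex_val_eq _ _⟩
      · exact ⟨0, by rw [uIcc_of_le zero_le_one]; exact ⟨le_refl 0, zero_le_one⟩,
          vertex_val_eq _ _⟩

lemma orderGe_mono {X : Type*} [TopologicalSpace X] {p : X} {n m : ℕ} (hmn : m ≤ n)
    (h : OrderGe X p n) : OrderGe X p m := by
  obtain ⟨F, hF1, hF2⟩ := h
  exact ⟨fun l => F (Fin.castLE hmn l), fun l => hF1 _,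
    fun l l' hll => hF2 _ _ (fun hh => hll (Fin.castLE_injective hmn hh))⟩

lemma orderGe_two_ordinary {i : ℕ} {c t : ℝ} (hc : c ∈ Kpiece i) (ht : t ∈ Ioo (0:ℝ) 1)
    (x : ↥𝕊) (hx : (x : ℝ × ℝ) = ((t * c, t * (1/2) ^ i) : ℝ × ℝ)) : OrderGe ↥𝕊 x 2 := by
  have htI : t ∈ Icc (0:ℝ) 1 := ⟨le_of_lt ht.1, le_of_lt ht.2⟩
  refine ⟨fun l => if l = 0 then bladeSet i c t 0 else bladeSet i c t 1, ?_, ?_⟩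
  · intro l
    show ∃ q, IsArcWith (if l = 0 then bladeSet i c t 0 else bladeSet i c t 1) x q
    by_cases hl : l = 0
    · subst hl
      rw [if_pos rfl]
      refine ⟨⟨((0 * c, 0 * (1/2) ^ i) : ℝ × ℝ), fan_pt_mem hc ⟨le_refl 0, zero_le_one⟩⟩, ?_⟩
      exact isArcWith_bladeSet hc htI ⟨le_refl 0, zero_le_one⟩ (ne_of_gt ht.1) x _ hx rfl
    · rw [if_neg hl]
      refine ⟨⟨((1 * c, 1 * (1/2) ^ i) : ℝ × ℝ), fan_pt_mem hc ⟨zero_le_one, le_refl 1⟩⟩, ?_⟩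
      exact isArcWith_bladeSet hc htI ⟨zero_le_one, le_refl 1⟩ (ne_of_lt ht.2) x _ hx rfl
  · have key : bladeSet i c t 0 ∩ bladeSet i c t 1 = {x} := by
      ext x'
      simp only [mem_inter_iff, mem_singleton_iff]
      constructor
      · rintro ⟨⟨s, hs, hx'⟩, ⟨s', hs', hx''⟩⟩
        rw [uIcc_comm, uIcc_of_le (le_of_lt ht.1)] at hs
        rw [uIcc_of_le (le_of_lt ht.2)] at hs'
        have hss : s * (1/2:ℝ)^i = s' * (1/2)^i := by
          rw [show s * (1/2:ℝ)^i = ((x' : ℝ × ℝ)).2 from by rw [hx'],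
            show s' * (1/2:ℝ)^i = ((x' : ℝ × ℝ)).2 from by rw [hx'']]
        have hsss : s = s' := mul_right_cancel₀ (by positivity) hss
        have hst : s = t := le_antisymm hs.2 (hsss ▸ hs'.1)
        apply Subtype.ext
        rw [hx', hst, hx]
      · rintro rfl
        exact ⟨⟨t, left_mem_uIcc, hx⟩, ⟨t, left_mem_uIcc, hx⟩⟩
    intro l m hlm
    show (if l = 0 then bladeSet i c t 0 else bladeSet i c t 1)
      ∩ (if m = 0 then bladeSet i c t 0 else bladeSet i c t 1) = {x}
    by_cases hl : l = 0
    · have hm : ¬ (m = 0) := fun hh => hlm (by rw [hl, hh])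
      rw [if_pos hl, if_neg hm]
      exact key
    · have hm : m = 0 := by omega
      rw [if_neg hl, if_pos hm, inter_comm]
      exact key

lemma zero_ne_one_unitInterval : (0 : unitInterval) ≠ 1 := by
  intro h
  have := congrArg Subtype.val h
  norm_num at this

lemma arc_facts {A : Set ↥𝕊} {p q : ↥𝕊} (h : IsArcWith A p q) :
    IsCompact (Subtype.val '' A) ∧ IsPreconnected (Subtype.val '' A) ∧ p ∈ A ∧ q ∈ A ∧ p ≠ q := by
  obtain ⟨e, he0, he1⟩ := h
  set f : unitInterval → ℝ × ℝ := fun u => (((e u : ↥A) : ↥𝕊) : ℝ × ℝ) with hf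
  have hfc : Continuous f :=
    continuous_subtype_val.comp (continuous_subtype_val.comp e.continuous)
  have hrange : Subtype.val '' A = range f := by
    ext y
    constructor
    · rintro ⟨x, hxA, rfl⟩
      refine ⟨e.symm ⟨x, hxA⟩, ?_⟩
      show ((((e (e.symm ⟨x, hxA⟩)) : ↥A) : ↥𝕊) : ℝ × ℝ) = (x : ℝ × ℝ)
      rw [e.apply_symm_apply]
    · rintro ⟨u, rfl⟩
      exact ⟨((e u : ↥A) : ↥𝕊), (e u).2, rfl⟩
  refine ⟨hrange ▸ isCompact_range hfc, ?_, ?_, ?_, ?_⟩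
  · have h1 := IsPreconnected.image isPreconnected_univ f hfc.continuousOn
    rw [image_univ] at h1
    exact hrange ▸ h1
  · exact he0 ▸ (e 0).2
  · exact he1 ▸ (e 1).2
  · intro hpq
    apply zero_ne_one_unitInterval
    apply e.injective
    apply Subtype.ext
    rw [he0, he1, hpq]

lemma blade_param_cancel {i : ℕ} {c w t : ℝ}
    (h : ((w * c, w * (1/2) ^ i) : ℝ × ℝ) = ((t * c, t * (1/2) ^ i) : ℝ × ℝ)) : w = t := by
  have h2 : w * (1/2:ℝ) ^ i = t * (1/2) ^ i := congrArg Prod.snd h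
  exact mul_right_cancel₀ (by positivity) h2

lemma val_inter_eq {F G : Set ↥𝕊} {x : ↥𝕊} (h : F ∩ G = {x}) :
    (Subtype.val '' F) ∩ (Subtype.val '' G) = {(x : ℝ × ℝ)} := by
  rw [← image_inter Subtype.coe_injective, h, image_singleton]

lemma pr_blade {i : ℕ} {s c : ℝ} : ((s * c, s * (1/2) ^ i) : ℝ × ℝ).2 * 2 ^ i = s := by
  show s * (1/2:ℝ)^i * 2^i = s
  rw [mul_assoc, half_pow_mul, mul_one]

lemma not_orderGe_two_endpoint {i : ℕ} {c : ℝ} (hc : c ∈ Kpiece i) (x : ↥𝕊)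
    (hx : (x : ℝ × ℝ) = ((c, (1/2) ^ i) : ℝ × ℝ)) : ¬ OrderGe ↥𝕊 x 2 := by
  rintro ⟨F, harcs, hints⟩
  have hx1 : (x : ℝ × ℝ) = ((1 * c, 1 * (1/2) ^ i) : ℝ × ℝ) := by rw [hx]; norm_num
  have claim : ∀ l : Fin 2, ∃ a, a ∈ Ico (0:ℝ) 1 ∧
      ∀ w ∈ Ioo a 1, ((w * c, w * (1/2) ^ i) : ℝ × ℝ) ∈ Subtype.val '' F l := by
    intro l
    obtain ⟨q, hq⟩ := harcs l
    obtain ⟨hcomp, hconn, hpA, hqA, hpq⟩ := arc_facts hq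
    have hsub : Subtype.val '' F l ⊆ 𝕊 := by rintro y ⟨y', _, rfl⟩; exact y'.2
    have hxA : (x : ℝ × ℝ) ∈ Subtype.val '' F l := ⟨x, hpA, rfl⟩
    rw [hx1] at hxA
    by_cases h0 : ((0,0) : ℝ × ℝ) ∈ Subtype.val '' F l
    · refine ⟨0, ⟨le_refl 0, one_pos⟩, ?_⟩
      intro w hw
      exact compact_connected_contains hsub hcomp hconn h0 hc ⟨one_pos, le_refl 1⟩ hxA w hw
    · have hblade := preconnected_subset_blade hsub hconn h0 hc ⟨one_pos, le_refl 1⟩ hxA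
      have hqA' : (q : ℝ × ℝ) ∈ Subtype.val '' F l := ⟨q, hqA, rfl⟩
      obtain ⟨sq, hsq, hq'⟩ := hblade _ hqA'
      have hsq1 : sq ≠ 1 := by
        intro hh
        apply hpq
        apply Subtype.ext
        rw [hq', hh, hx1]
      have hsqlt : sq < 1 := lt_of_le_of_ne hsq.2 hsq1
      refine ⟨sq, ⟨le_of_lt hsq.1, hsqlt⟩, ?_⟩
      intro w hw
      set pr : ℝ × ℝ → ℝ := fun y => y.2 * 2 ^ i with hpr
      have hBpc : IsPreconnected (pr '' (Subtype.val '' F l)) :=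
        hconn.image pr (continuous_snd.mul continuous_const).continuousOn
      have hq_p : sq ∈ pr '' (Subtype.val '' F l) := ⟨_, hqA', by rw [hq']; exact pr_blade⟩
      have hx_p : (1:ℝ) ∈ pr '' (Subtype.val '' F l) := ⟨_, hxA, pr_blade⟩
      have hwmem : w ∈ pr '' (Subtype.val '' F l) :=
        hBpc.ordConnected.out hq_p hx_p ⟨le_of_lt hw.1, le_of_lt hw.2⟩
      obtain ⟨y, hy, hyw⟩ := hwmem
      obtain ⟨sy, _, hy'⟩ := hblade y hy
      have : sy = w := by rw [hy'] at hyw; rw [← hyw]; exact pr_blade.symm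
      rw [← this, ← hy']
      exact hy
  obtain ⟨a0, ha0, hA0⟩ := claim 0
  obtain ⟨a1, ha1, hA1⟩ := claim 1
  set w : ℝ := (max a0 a1 + 1)/2 with hw
  have hmax1 : max a0 a1 < 1 := max_lt ha0.2 ha1.2
  have hw1 : w < 1 := by rw [hw]; linarith
  have hw0 : max a0 a1 < w := by rw [hw]; linarith
  have hm0 := hA0 w ⟨lt_of_le_of_lt (le_max_left _ _) hw0, hw1⟩
  have hm1 := hA1 w ⟨lt_of_le_of_lt (le_max_right _ _) hw0, hw1⟩
  have hint := val_inter_eq (hints 0 1 (by decide))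
  have : ((w * c, w * (1/2) ^ i) : ℝ × ℝ) ∈ ({(x : ℝ × ℝ)} : Set (ℝ × ℝ)) :=
    hint ▸ mem_inter hm0 hm1
  rw [mem_singleton_iff, hx1] at this
  exact absurd (blade_param_cancel this) (ne_of_lt hw1)

lemma not_orderGe_three_ordinary {i : ℕ} {c t : ℝ} (hc : c ∈ Kpiece i) (ht : t ∈ Ioo (0:ℝ) 1)
    (x : ↥𝕊) (hx : (x : ℝ × ℝ) = ((t * c, t * (1/2) ^ i) : ℝ × ℝ)) : ¬ OrderGe ↥𝕊 x 3 := by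
  rintro ⟨F, harcs, hints⟩
  have claim : ∀ l : Fin 3, ∃ u, u ∈ Icc (0:ℝ) 1 ∧ u ≠ t ∧
      ∀ w ∈ uIcc u t, ((w * c, w * (1/2) ^ i) : ℝ × ℝ) ∈ Subtype.val '' F l := by
    intro l
    obtain ⟨q, hq⟩ := harcs l
    obtain ⟨hcomp, hconn, hpA, hqA, hpq⟩ := arc_facts hq
    have hsub : Subtype.val '' F l ⊆ 𝕊 := by rintro y ⟨y', _, rfl⟩; exact y'.2
    have hxA : ((t * c, t * (1/2) ^ i) : ℝ × ℝ) ∈ Subtype.val '' F l := ⟨x, hpA, hx⟩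
    have htIoc : t ∈ Ioc (0:ℝ) 1 := ⟨ht.1, le_of_lt ht.2⟩
    by_cases h0 : ((0,0) : ℝ × ℝ) ∈ Subtype.val '' F l
    · refine ⟨t/2, ⟨by linarith [ht.1], by linarith [ht.2]⟩, by linarith [ht.1], ?_⟩
      intro w hw
      rw [uIcc_of_le (by linarith [ht.1])] at hw
      rcases eq_or_lt_of_le hw.2 with hwt | hwt
      · rw [hwt]; exact hxA
      · exact compact_connected_contains hsub hcomp hconn h0 hc htIoc hxA w
          ⟨by linarith [hw.1, ht.1], hwt⟩
    · have hblade := preconnected_subset_blade hsub hconn h0 hc htIoc hxA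
      have hqA' : (q : ℝ × ℝ) ∈ Subtype.val '' F l := ⟨q, hqA, rfl⟩
      obtain ⟨sq, hsq, hq'⟩ := hblade _ hqA'
      have hsqt : sq ≠ t := by
        intro hh
        apply hpq
        apply Subtype.ext
        rw [hq', hh, hx]
      refine ⟨sq, ⟨le_of_lt hsq.1, hsq.2⟩, hsqt, ?_⟩
      intro w hw
      set pr : ℝ × ℝ → ℝ := fun y => y.2 * 2 ^ i with hpr
      have hBpc : IsPreconnected (pr '' (Subtype.val '' F l)) :=
        hconn.image pr (continuous_snd.mul continuous_const).continuousOn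
      have hq_p : sq ∈ pr '' (Subtype.val '' F l) := ⟨_, hqA', by rw [hq']; exact pr_blade⟩
      have hx_p : t ∈ pr '' (Subtype.val '' F l) := ⟨_, hxA, pr_blade⟩
      have hwmem : w ∈ pr '' (Subtype.val '' F l) := by
        rcases mem_uIcc.mp hw with ⟨h1, h2⟩ | ⟨h1, h2⟩
        · exact hBpc.ordConnected.out hq_p hx_p ⟨h1, h2⟩
        · exact hBpc.ordConnected.out hx_p hq_p ⟨h1, h2⟩
      obtain ⟨y, hy, hyw⟩ := hwmem
      obtain ⟨sy, _, hy'⟩ := hblade y hy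
      have : sy = w := by rw [hy'] at hyw; rw [← hyw]; exact pr_blade.symm
      rw [← this, ← hy']
      exact hy
  choose u hu1 hu2 hu3 using claim
  have hpig : ∃ l m : Fin 3, l ≠ m ∧ (decide (u l < t)) = (decide (u m < t)) := by
    have hcard : Fintype.card Bool < Fintype.card (Fin 3) := by simp
    obtain ⟨l, m, hlm, heq⟩ := Fintype.exists_ne_map_eq_of_card_lt
      (fun l : Fin 3 => decide (u l < t)) hcard
    exact ⟨l, m, hlm, heq⟩
  obtain ⟨l, m, hlm, hdec⟩ := hpig
  have hfinal : ∀ w, w ≠ t → w ∈ uIcc (u l) t → w ∈ uIcc (u m) t → False := by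
    intro w hwt hwl hwm
    have h1 := hu3 l w hwl
    have h2 := hu3 m w hwm
    have hint := val_inter_eq (hints l m hlm)
    have : ((w * c, w * (1/2) ^ i) : ℝ × ℝ) ∈ ({(x : ℝ × ℝ)} : Set (ℝ × ℝ)) :=
      hint ▸ mem_inter h1 h2
    rw [mem_singleton_iff, hx] at this
    exact hwt (blade_param_cancel this)
  by_cases hul : u l < t
  · have hum : u m < t := of_decide_eq_true (hdec ▸ decide_eq_true hul)
    set w : ℝ := max (u l) (u m) with hwdef
    have hwlt : w < t := max_lt hul hum
    apply hfinal w (ne_of_lt hwlt)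
    · rw [uIcc_of_le (le_of_lt hul)]
      exact ⟨le_max_left _ _, le_of_lt hwlt⟩
    · rw [uIcc_of_le (le_of_lt hum)]
      exact ⟨le_max_right _ _, le_of_lt hwlt⟩
  · have hul' : t < u l := lt_of_le_of_ne (not_lt.mp hul) (Ne.symm (hu2 l))
    have hum' : t < u m := by
      have hdm : decide (u m < t) = false := hdec ▸ decide_eq_false hul
      exact lt_of_le_of_ne (not_lt.mp (of_decide_eq_false hdm)) (Ne.symm (hu2 m))
    set w : ℝ := min (u l) (u m) with hwdef
    have hwgt : t < w := lt_min hul' hum'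
    apply hfinal w (Ne.symm (ne_of_lt hwgt))
    · rw [uIcc_of_ge (le_of_lt hul')]
      exact ⟨le_of_lt hwgt, min_le_left _ _⟩
    · rw [uIcc_of_ge (le_of_lt hum')]
      exact ⟨le_of_lt hwgt, min_le_right _ _⟩

/-! ### Orbits -/

lemma isArcWith_image {X : Type*} [TopologicalSpace X] (h : X ≃ₜ X) {A : Set X} {p q : X}
    (harc : IsArcWith A p q) : IsArcWith (h '' A) (h p) (h q) := by
  obtain ⟨e, he0, he1⟩ := harc
  refine ⟨e.trans (h.image A), ?_, ?_⟩
  · show ((h.image A) (e 0) : X) = h p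
    rw [← he0]
    rfl
  · show ((h.image A) (e 1) : X) = h q
    rw [← he1]
    rfl

lemma orderGe_homeo {X : Type*} [TopologicalSpace X] (h : X ≃ₜ X) {p : X} {n : ℕ}
    (horder : OrderGe X p n) : OrderGe X (h p) n := by
  obtain ⟨F, hF1, hF2⟩ := horder
  refine ⟨fun l => h '' F l, fun l => ?_, fun l m hlm => ?_⟩
  · obtain ⟨q, hq⟩ := hF1 l
    exact ⟨h q, isArcWith_image h hq⟩
  · rw [← image_inter h.injective, hF2 l m hlm, image_singleton]

lemma mem_orbit_self {X : Type*} [TopologicalSpace X] (x : X) : x ∈ orbit X x :=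
  ⟨Homeomorph.refl X, rfl⟩

lemma orbit_eq_of_exists {X : Type*} [TopologicalSpace X] {x y : X}
    (h : ∃ g : X ≃ₜ X, g x = y) : orbit X x = orbit X y := by
  obtain ⟨g, hg⟩ := h
  ext z
  constructor
  · rintro ⟨g', rfl⟩
    exact ⟨g.symm.trans g', by
      show g' (g.symm y) = g' x
      rw [← hg, g.symm_apply_apply]⟩
  · rintro ⟨g', rfl⟩
    exact ⟨g.trans g', by
      show g' (g x) = g' y
      rw [hg]⟩

lemma orderGe_of_mem_orbit {X : Type*} [TopologicalSpace X] {x y : X} {n : ℕ}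
    (hy : y ∈ orbit X x) (hx : OrderGe X x n) : OrderGe X y n := by
  obtain ⟨h, rfl⟩ := hy
  exact orderGe_homeo h hx

/-! ### The three canonical points -/

lemma half_mem_Ioo : (1/2 : ℝ) ∈ Ioo (0:ℝ) 1 := by norm_num

/-- The canonical endpoint. -/
noncomputable def fanEndpoint : ↥𝕊 :=
  ⟨((1 * 0, 1 * (1/2:ℝ)^0) : ℝ × ℝ), fan_pt_mem zero_mem_Kpiece ⟨zero_le_one, le_refl 1⟩⟩

/-- The canonical ordinary point. -/
noncomputable def fanMidpoint : ↥𝕊 :=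
  ⟨((1/2 * 0, 1/2 * (1/2:ℝ)^0) : ℝ × ℝ),
    fan_pt_mem zero_mem_Kpiece ⟨by norm_num, by norm_num⟩⟩

lemma fanEndpoint_val : (fanEndpoint : ℝ × ℝ) = (((0:ℝ), (1/2:ℝ)^0) : ℝ × ℝ) := by
  show ((1 * 0, 1 * (1/2:ℝ)^0) : ℝ × ℝ) = (((0:ℝ), (1/2:ℝ)^0) : ℝ × ℝ)
  norm_num

lemma fanMidpoint_val : (fanMidpoint : ℝ × ℝ) = ((1/2 * 0, 1/2 * (1/2:ℝ)^0) : ℝ × ℝ) := rfl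

/-- Classification of points of the fan. -/
lemma fan_point_trichotomy (x : ↥𝕊) :
    x = fanVertex ∨
    (∃ i : ℕ, ∃ c : ℝ, c ∈ Kpiece i ∧ (x : ℝ × ℝ) = ((c, (1/2) ^ i) : ℝ × ℝ)) ∨
    (∃ i : ℕ, ∃ c t : ℝ, c ∈ Kpiece i ∧ t ∈ Ioo (0:ℝ) 1 ∧
      (x : ℝ × ℝ) = ((t * c, t * (1/2) ^ i) : ℝ × ℝ)) := by
  by_cases h0 : (x : ℝ × ℝ) = ((0,0) : ℝ × ℝ)
  · exact Or.inl (Subtype.ext h0)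
  · obtain ⟨⟨i, c, t⟩, hc, ht, hx⟩ := exists_rep x.2 h0
    simp only at hc ht hx
    rcases eq_or_lt_of_le ht.2 with h1 | h1
    · refine Or.inr (Or.inl ⟨i, c, hc, ?_⟩)
      rw [hx, h1]
      norm_num
    · exact Or.inr (Or.inr ⟨i, c, t, hc, ⟨ht.1, h1⟩, hx⟩)

lemma orbits_fan_eq :
    orbits ↥𝕊 = {orbit ↥𝕊 fanVertex, orbit ↥𝕊 fanEndpoint, orbit ↥𝕊 fanMidpoint} := by
  ext A
  constructor
  · rintro ⟨x, rfl⟩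
    rcases fan_point_trichotomy x with h | ⟨i, c, hc, hx⟩ | ⟨i, c, t, hc, ht, hx⟩
    · rw [h]
      exact Or.inl rfl
    · right; left
      rw [← orbit_eq_of_exists (exists_homeo_endpoint zero_mem_Kpiece hc
        fanEndpoint x fanEndpoint_val hx)]
    · right; right
      rw [← orbit_eq_of_exists (exists_homeo_ordinary zero_mem_Kpiece hc
        half_mem_Ioo ht fanMidpoint x fanMidpoint_val hx)]
      rfl
  · rintro (rfl | rfl | rfl)
    · exact ⟨fanVertex, rfl⟩
    · exact ⟨fanEndpoint, rfl⟩
    · exact ⟨fanMidpoint, rfl⟩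

lemma orbit_distinct :
    orbit ↥𝕊 fanVertex ≠ orbit ↥𝕊 fanEndpoint ∧
    orbit ↥𝕊 fanVertex ≠ orbit ↥𝕊 fanMidpoint ∧
    orbit ↥𝕊 fanEndpoint ≠ orbit ↥𝕊 fanMidpoint := by
  have hv3 : OrderGe ↥𝕊 fanVertex 3 := orderGe_vertex_three
  have hv2 : OrderGe ↥𝕊 fanVertex 2 := orderGe_mono (by norm_num) hv3
  have he2 : ¬ OrderGe ↥𝕊 fanEndpoint 2 :=
    not_orderGe_two_endpoint zero_mem_Kpiece fanEndpoint fanEndpoint_val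
  have hm3 : ¬ OrderGe ↥𝕊 fanMidpoint 3 :=
    not_orderGe_three_ordinary zero_mem_Kpiece half_mem_Ioo fanMidpoint fanMidpoint_val
  have hm2 : OrderGe ↥𝕊 fanMidpoint 2 :=
    orderGe_two_ordinary zero_mem_Kpiece half_mem_Ioo fanMidpoint fanMidpoint_val
  refine ⟨?_, ?_, ?_⟩
  · intro heq
    exact he2 (orderGe_of_mem_orbit (heq ▸ mem_orbit_self fanEndpoint) hv2)
  · intro heq
    exact hm3 (orderGe_of_mem_orbit (heq ▸ mem_orbit_self fanMidpoint) hv3)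
  · intro heq
    exact he2 (orderGe_of_mem_orbit (heq.symm ▸ mem_orbit_self fanEndpoint) hm2)

theorem shrinkingCantorFan_oneThirdHomogeneous' :
    OneOverHomogeneous ↥𝕊 3 := by
  rw [OneOverHomogeneous, orbits_fan_eq]
  obtain ⟨d1, d2, d3⟩ := orbit_distinct
  rw [Set.ncard_insert_of_notMem (by simp [d1, d2]) (Set.toFinite _),
    Set.ncard_insert_of_notMem (by simp [d3]) (Set.toFinite _),
    Set.ncard_singleton]

/-- The shrinking Cantor fan `F_{C_ω}` is `1/3`-homogeneous. -/
theorem shrinkingCantorFan_oneThirdHomogeneous :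
    OneOverHomogeneous shrinkingCantorFan 3 :=
  shrinkingCantorFan_oneThirdHomogeneous'


end FansHomogeneity
end

section
/- Let X be a fan with top t. If for each x ∈ X − {t} we have (tx) ∩ S(X) ≠ ∅, then E(X) ⊆ S(X). -/
open Set Filter Topology Metric

namespace FansHomogeneity

set_option linter.unusedSectionVars false

section Helpers

variable {X : Type*} [TopologicalSpace X] [T2Space X]

lemma IsArcWith.exists_param {A : Set X} {p q : X} (h : IsArcWith A p q) :
    ∃ f : unitInterval → X, Continuous f ∧ Function.Injective f ∧
      Set.range f = A ∧ f 0 = p ∧ f 1 = q := by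
  obtain ⟨e, h0, h1⟩ := h
  refine ⟨fun u => (e u : X), continuous_subtype_val.comp e.continuous,
    fun u v huv => e.injective (Subtype.ext huv), ?_, h0, h1⟩
  ext x
  constructor
  · rintro ⟨u, rfl⟩; exact (e u).2
  · intro hx
    exact ⟨e.symm ⟨x, hx⟩, by simp⟩

lemma isArcWith_range (f : unitInterval → X) (hf : Continuous f)
    (hinj : Function.Injective f) : IsArcWith (Set.range f) (f 0) (f 1) := by
  refine ⟨(hf.isClosedEmbedding hinj).toIsEmbedding.toHomeomorph, ?_, ?_⟩ <;> rfl

lemma isArcWith_of_range_eq {A : Set X} (f : unitInterval → X) (hf : Continuous f)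
    (hinj : Function.Injective f) (hA : Set.range f = A) : IsArcWith A (f 0) (f 1) := by
  subst hA; exact isArcWith_range f hf hinj

/-- key segment lemma -/
lemma arcSeg {f : unitInterval → X} (hf : Continuous f) (hinj : Function.Injective f)
    (a b : unitInterval) : IsArcOrPt (f '' Set.uIcc a b) (f a) (f b) := by
  rcases eq_or_ne a b with rfl | hab
  · exact Or.inl ⟨rfl, by simp⟩
  right
  have hab' : (a : ℝ) ≠ (b : ℝ) := fun hh => hab (Subtype.ext hh)
  set d : ℝ := (b : ℝ) - (a : ℝ) with hd_def
  have hd : d ≠ 0 := sub_ne_zero.2 (Ne.symm hab')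
  have memIcc : ∀ u : unitInterval, (a : ℝ) + (u : ℝ) * d ∈ Set.uIcc (a : ℝ) (b : ℝ) := by
    intro u
    rcases le_total (a : ℝ) (b : ℝ) with hab0 | hab0
    · rw [Set.uIcc_of_le hab0]
      constructor
      · nlinarith [u.2.1, u.2.2]
      · nlinarith [u.2.1, u.2.2]
    · rw [Set.uIcc_of_ge hab0]
      constructor
      · nlinarith [u.2.1, u.2.2]
      · nlinarith [u.2.1, u.2.2]
  have memI : ∀ u : unitInterval, (a : ℝ) + (u : ℝ) * d ∈ Set.Icc (0:ℝ) 1 := by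
    intro u
    have := memIcc u
    rcases Set.mem_uIcc.1 this with ⟨h1, h2⟩ | ⟨h1, h2⟩
    · exact ⟨le_trans a.2.1 h1, le_trans h2 b.2.2⟩
    · exact ⟨le_trans b.2.1 h1, le_trans h2 a.2.2⟩
  set g : unitInterval → unitInterval := fun u => ⟨(a : ℝ) + (u : ℝ) * d, memI u⟩ with hg_def
  have hgc : Continuous g := by
    apply Continuous.subtype_mk
    exact continuous_const.add (continuous_subtype_val.mul continuous_const)
  have hgi : Function.Injective g := by
    intro u v huv
    have h1 : (a : ℝ) + (u : ℝ) * d = (a : ℝ) + (v : ℝ) * d := congrArg Subtype.val huv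
    have h2 : (u : ℝ) * d = (v : ℝ) * d := by linarith
    exact Subtype.ext (mul_right_cancel₀ hd h2)
  have hrange : Set.range g = Set.uIcc a b := by
    ext u
    constructor
    · rintro ⟨v, rfl⟩
      have := memIcc v
      rcases Set.mem_uIcc.1 this with ⟨h1, h2⟩ | ⟨h1, h2⟩
      · exact Set.mem_uIcc.2 (Or.inl ⟨h1, h2⟩)
      · exact Set.mem_uIcc.2 (Or.inr ⟨h1, h2⟩)
    · intro hu
      have hu' : (u : ℝ) ∈ Set.uIcc (a : ℝ) (b : ℝ) := by
        rcases Set.mem_uIcc.1 hu with ⟨h1, h2⟩ | ⟨h1, h2⟩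
        · exact Set.mem_uIcc.2 (Or.inl ⟨h1, h2⟩)
        · exact Set.mem_uIcc.2 (Or.inr ⟨h1, h2⟩)
      set w : ℝ := ((u : ℝ) - (a : ℝ)) / d with hw_def
      have hw : w ∈ Set.Icc (0:ℝ) 1 := by
        rcases lt_or_gt_of_ne hd with hneg | hpos
        · have hba : (b:ℝ) ≤ (a:ℝ) := by linarith
          rw [Set.uIcc_of_ge hba] at hu'
          constructor
          · exact div_nonneg_iff.2 (Or.inr ⟨by linarith [hu'.2], le_of_lt hneg⟩)
          · exact div_le_one_iff.2 (Or.inr (Or.inr ⟨hneg, by linarith [hu'.1]⟩))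
        · have hba : (a:ℝ) ≤ (b:ℝ) := by linarith
          rw [Set.uIcc_of_le hba] at hu'
          constructor
          · exact div_nonneg (by linarith [hu'.1]) (le_of_lt hpos)
          · rw [div_le_one hpos]; linarith [hu'.2]
      refine ⟨⟨w, hw⟩, ?_⟩
      apply Subtype.ext
      show (a : ℝ) + w * d = (u : ℝ)
      rw [hw_def, div_mul_cancel₀ _ hd]
      ring
  have key : Set.range (f ∘ g) = f '' Set.uIcc a b := by
    rw [Set.range_comp, hrange]
  have h0 : (f ∘ g) 0 = f a := by
    simp only [Function.comp_apply]
    congr 1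
    apply Subtype.ext; show (a:ℝ) + ((0: unitInterval) : ℝ) * d = (a:ℝ)
    norm_num
  have h1 : (f ∘ g) 1 = f b := by
    simp only [Function.comp_apply]
    congr 1
    apply Subtype.ext; show (a:ℝ) + ((1: unitInterval) : ℝ) * d = (b:ℝ)
    rw [hd_def]; norm_num
  have := isArcWith_of_range_eq (f ∘ g) (hf.comp hgc) (hinj.comp hgi) key
  rwa [h0, h1] at this

lemma IsArcWith.isCompact {A : Set X} {p q : X} (h : IsArcWith A p q) : IsCompact A := by
  obtain ⟨f, hf, hinj, hA, -, -⟩ := h.exists_param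
  rw [← hA]; exact isCompact_range hf

lemma IsArcWith.isPreconnected {A : Set X} {p q : X} (h : IsArcWith A p q) :
    IsPreconnected A := by
  obtain ⟨f, hf, hinj, hA, -, -⟩ := h.exists_param
  rw [← hA]; exact (isConnected_range hf).isPreconnected

lemma IsArcWith.left_mem {A : Set X} {p q : X} (h : IsArcWith A p q) : p ∈ A := by
  obtain ⟨f, hf, hinj, hA, h0, -⟩ := h.exists_param
  rw [← hA, ← h0]; exact Set.mem_range_self _

lemma IsArcWith.right_mem {A : Set X} {p q : X} (h : IsArcWith A p q) : q ∈ A := by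
  obtain ⟨f, hf, hinj, hA, -, h1⟩ := h.exists_param
  rw [← hA, ← h1]; exact Set.mem_range_self _

lemma IsArcOrPt.isCompact {A : Set X} {p q : X} (h : IsArcOrPt A p q) : IsCompact A := by
  rcases h with ⟨-, rfl⟩ | h
  · exact isCompact_singleton
  · exact h.isCompact

lemma IsArcOrPt.isPreconnected {A : Set X} {p q : X} (h : IsArcOrPt A p q) :
    IsPreconnected A := by
  rcases h with ⟨-, rfl⟩ | h
  · exact isPreconnected_singleton
  · exact h.isPreconnected

lemma IsArcOrPt.left_mem {A : Set X} {p q : X} (h : IsArcOrPt A p q) : p ∈ A := by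
  rcases h with ⟨-, rfl⟩ | h
  · exact Set.mem_singleton _
  · exact h.left_mem

lemma IsArcOrPt.right_mem {A : Set X} {p q : X} (h : IsArcOrPt A p q) : q ∈ A := by
  rcases h with ⟨rfl, rfl⟩ | h
  · exact Set.mem_singleton _
  · exact h.right_mem

lemma IsArcOrPt.nonempty {A : Set X} {p q : X} (h : IsArcOrPt A p q) : A.Nonempty :=
  ⟨p, h.left_mem⟩

/-- Pull back a preconnected subset of an arc through the parametrization. -/
lemma preconnected_preimage {f : unitInterval → X} (hf : Continuous f)
    (hinj : Function.Injective f) {S : Set X} (hS : IsPreconnected S)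
    (hsub : S ⊆ Set.range f) : IsPreconnected (f ⁻¹' S) := by
  have hemb : Topology.IsInducing f := (hf.isClosedEmbedding hinj).toIsEmbedding.toIsInducing
  have himg : f '' (f ⁻¹' S) = S := Set.image_preimage_eq_of_subset hsub
  exact hemb.isPreconnected_image.1 (by rwa [himg])

/-- A compact connected subset of an arc containing the initial endpoint is an initial
segment of the arc. -/
lemma exists_Icc_param {f : unitInterval → X} (hf : Continuous f)
    (hinj : Function.Injective f) {S : Set X} (hS : IsPreconnected S) (hSc : IsCompact S)
    (hsub : S ⊆ Set.range f) (h0 : f 0 ∈ S) :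
    ∃ c : unitInterval, S = f '' Set.Icc 0 c := by
  set Q : Set unitInterval := f ⁻¹' S with hQ_def
  have hQpre : IsPreconnected Q := preconnected_preimage hf hinj hS hsub
  have hQc : IsCompact Q := (hSc.isClosed.preimage hf).isCompact
  have h0Q : (0 : unitInterval) ∈ Q := h0
  set Q' : Set ℝ := Subtype.val '' Q with hQ'_def
  have hQ'pre : IsPreconnected Q' := hQpre.image _ continuous_subtype_val.continuousOn
  have hQ'c : IsCompact Q' := hQc.image continuous_subtype_val
  have h0Q' : (0 : ℝ) ∈ Q' := ⟨0, h0Q, rfl⟩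
  have hQ'ne : Q'.Nonempty := ⟨0, h0Q'⟩
  have hQ'sub : Q' ⊆ Set.Icc (0:ℝ) 1 := by rintro x ⟨u, -, rfl⟩; exact u.2
  set c' : ℝ := sSup Q' with hc'_def
  have hc'mem : c' ∈ Q' := hQ'c.sSup_mem hQ'ne
  have hc'I : c' ∈ Set.Icc (0:ℝ) 1 := hQ'sub hc'mem
  refine ⟨⟨c', hc'I⟩, ?_⟩
  have hQeq : Q = Set.Icc 0 ⟨c', hc'I⟩ := by
    ext u
    constructor
    · intro hu
      refine ⟨u.2.1, ?_⟩
      show (u : ℝ) ≤ c'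
      exact le_csSup hQ'c.bddAbove ⟨u, hu, rfl⟩
    · rintro ⟨-, hu2⟩
      have : (u : ℝ) ∈ Q' := hQ'pre.ordConnected.out h0Q' hc'mem ⟨u.2.1, hu2⟩
      obtain ⟨v, hv, hvu⟩ := this
      rwa [show u = v from Subtype.ext hvu.symm]
  rw [← hQeq, hQ_def, Set.image_preimage_eq_of_subset hsub]

end Helpers

section MetricHelpers

variable {X : Type*} [MetricSpace X] [CompactSpace X]

lemma hEdist_ne_top (s u : Set X) (hs : s.Nonempty) (hu : u.Nonempty) :
    EMetric.hausdorffEdist s u ≠ ⊤ :=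
  Metric.hausdorffEdist_ne_top_of_nonempty_of_bounded hs hu
    (Bornology.IsBounded.subset (isCompact_univ.isBounded) (Set.subset_univ _))
    (Bornology.IsBounded.subset (isCompact_univ.isBounded) (Set.subset_univ _))

open TopologicalSpace in
lemma limit_mem {K : ℕ → NonemptyCompacts X} {L : NonemptyCompacts X}
    (hT : Tendsto K atTop (nhds L)) {x : ℕ → X} (hx : ∀ n, x n ∈ (K n : Set X))
    {y : X} (hy : Tendsto x atTop (nhds y)) : y ∈ (L : Set X) := by
  have hL : IsClosed (L : Set X) := L.isCompact.isClosed
  rw [hL.mem_iff_infDist_zero L.nonempty]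
  have hdist : Tendsto (fun n => dist (K n) L) atTop (nhds 0) :=
    (tendsto_iff_dist_tendsto_zero).1 hT
  have hb : ∀ n, infDist y (L : Set X) ≤ dist y (x n) + dist (K n) L := by
    intro n
    calc infDist y (L : Set X) ≤ infDist (x n) (L : Set X) + dist y (x n) :=
          infDist_le_infDist_add_dist
      _ ≤ hausdorffDist (K n : Set X) (L : Set X) + dist y (x n) := by
          gcongr
          exact infDist_le_hausdorffDist_of_mem (hx n)
            (hEdist_ne_top _ _ (K n).nonempty L.nonempty)
      _ = dist y (x n) + dist (K n) L := by
          rw [NonemptyCompacts.dist_eq]; ring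
  have htend : Tendsto (fun n => dist y (x n) + dist (K n) L) atTop (nhds 0) := by
    have h1 : Tendsto (fun n => dist y (x n)) atTop (nhds 0) :=
      ((tendsto_iff_dist_tendsto_zero).1 hy).congr (fun n => by rw [dist_comm])
    simpa using h1.add hdist
  have : infDist y (L : Set X) ≤ 0 := ge_of_tendsto' htend hb
  exact le_antisymm this infDist_nonneg

open TopologicalSpace in
lemma approx_seq {K : ℕ → NonemptyCompacts X} {L : NonemptyCompacts X}
    (hT : Tendsto K atTop (nhds L)) {s : X} (hs : s ∈ (L : Set X)) :
    ∃ b : ℕ → X, (∀ n, b n ∈ (K n : Set X)) ∧ Tendsto b atTop (nhds s) := by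
  have hch : ∀ n, ∃ y ∈ (K n : Set X), infDist s (K n : Set X) = dist s y := fun n =>
    (K n).isCompact.exists_infDist_eq_dist (K n).nonempty s
  choose b hb hbd using hch
  refine ⟨b, hb, ?_⟩
  rw [tendsto_iff_dist_tendsto_zero]
  apply squeeze_zero (fun n => dist_nonneg) (g := fun n => dist (K n) L)
  · intro n
    rw [dist_comm, ← hbd n]
    calc infDist s (K n : Set X) ≤ hausdorffDist (L : Set X) (K n : Set X) :=
          infDist_le_hausdorffDist_of_mem hs (hEdist_ne_top _ _ L.nonempty (K n).nonempty)
      _ = dist (K n) L := by rw [NonemptyCompacts.dist_eq, hausdorffDist_comm]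
  · exact (tendsto_iff_dist_tendsto_zero).1 hT

open TopologicalSpace in
/-- The Hausdorff limit of preconnected nonempty compacts is preconnected. -/
lemma preconnected_limit {K : ℕ → NonemptyCompacts X} {L : NonemptyCompacts X}
    (hT : Tendsto K atTop (nhds L)) (hK : ∀ n, IsPreconnected (K n : Set X)) :
    IsPreconnected (L : Set X) := by
  by_contra hnc
  rw [IsPreconnected] at hnc
  push_neg at hnc
  obtain ⟨U, V, hU, hV, hcov, hPne, hQne, hUV⟩ := hnc
  set P : Set X := (L : Set X) ∩ U with hP_def
  set Q : Set X := (L : Set X) ∩ V with hQ_def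
  have hPV : P = (L : Set X) ∩ Vᶜ := by
    apply Set.eq_of_subset_of_subset
    · rintro x ⟨hxL, hxU⟩
      refine ⟨hxL, fun hxV => ?_⟩
      have : x ∈ (L : Set X) ∩ (U ∩ V) := ⟨hxL, hxU, hxV⟩
      rw [hUV] at this
      exact this
    · rintro x ⟨hxL, hxV⟩
      rcases hcov hxL with hh | hh
      · exact ⟨hxL, hh⟩
      · exact absurd hh hxV
  have hQU : Q = (L : Set X) ∩ Uᶜ := by
    apply Set.eq_of_subset_of_subset
    · rintro x ⟨hxL, hxV⟩
      refine ⟨hxL, fun hxU => ?_⟩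
      have : x ∈ (L : Set X) ∩ (U ∩ V) := ⟨hxL, hxU, hxV⟩
      rw [hUV] at this
      exact this
    · rintro x ⟨hxL, hxU⟩
      rcases hcov hxL with hh | hh
      · exact absurd hh hxU
      · exact ⟨hxL, hh⟩
  have hPc : IsCompact P := by
    rw [hPV]; exact L.isCompact.inter_right (hV.isClosed_compl)
  have hQc : IsCompact Q := by
    rw [hQU]; exact L.isCompact.inter_right (hU.isClosed_compl)
  have hdisj : Disjoint P Q := by
    rw [Set.disjoint_iff_inter_eq_empty]
    rw [Set.eq_empty_iff_forall_notMem]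
    rintro x ⟨⟨hxL, hxU⟩, ⟨-, hxV⟩⟩
    have : x ∈ (L : Set X) ∩ (U ∩ V) := ⟨hxL, hxU, hxV⟩
    rw [hUV] at this
    exact this
  obtain ⟨δ, hδpos, hδ⟩ := hdisj.exists_thickenings hPc hQc.isClosed
  have hev : ∀ᶠ n in atTop, dist (K n) L < δ := by
    have := (tendsto_iff_dist_tendsto_zero).1 hT
    exact (this.eventually (eventually_lt_nhds hδpos)).mono (fun n hn => by simpa using hn)
  obtain ⟨n, hn⟩ := hev.exists
  have hhd : hausdorffDist (K n : Set X) (L : Set X) < δ := by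
    rwa [← NonemptyCompacts.dist_eq]
  have hfin := hEdist_ne_top (K n : Set X) (L : Set X) (K n).nonempty L.nonempty
  have hsub : (K n : Set X) ⊆ thickening δ P ∪ thickening δ Q := by
    intro x hxK
    obtain ⟨y, hyL, hxy⟩ := exists_dist_lt_of_hausdorffDist_lt hxK hhd hfin
    rcases hcov hyL with hh | hh
    · exact Or.inl (mem_thickening_iff.2 ⟨y, ⟨hyL, hh⟩, hxy⟩)
    · exact Or.inr (mem_thickening_iff.2 ⟨y, ⟨hyL, hh⟩, hxy⟩)
  have h1 : ((K n : Set X) ∩ thickening δ P).Nonempty := by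
    obtain ⟨xu, hxu⟩ := hPne
    obtain ⟨z, hz, hzd⟩ := exists_dist_lt_of_hausdorffDist_lt' hxu.1 hhd hfin
    exact ⟨z, hz, mem_thickening_iff.2 ⟨xu, hxu, hzd⟩⟩
  have h2 : ((K n : Set X) ∩ thickening δ Q).Nonempty := by
    obtain ⟨xv, hxv⟩ := hQne
    obtain ⟨z, hz, hzd⟩ := exists_dist_lt_of_hausdorffDist_lt' hxv.1 hhd hfin
    exact ⟨z, hz, mem_thickening_iff.2 ⟨xv, hxv, hzd⟩⟩
  obtain ⟨x, -, hx⟩ := hK n _ _ (isOpen_thickening) (isOpen_thickening) hsub h1 h2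
  exact Set.disjoint_iff.1 hδ hx

end MetricHelpers


section DendroidHelpers

lemma OrderGe.anti {X : Type*} [TopologicalSpace X] {p : X} {m n : ℕ} (hmn : m ≤ n)
    (h : OrderGe X p n) : OrderGe X p m := by
  obtain ⟨F, hF, hFp⟩ := h
  refine ⟨fun i => F (i.castLE hmn), fun i => hF _, fun i j hij => hFp _ _ ?_⟩
  intro hh
  exact hij (Fin.ext (by simpa using congrArg Fin.val hh))

lemma arc_subset {X : Type*} [MetricSpace X] (HU : HereditarilyUnicoherent X)
    {g : unitInterval → X} (hg : Continuous g) (hgi : Function.Injective g)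
    {L : Set X} (hLc : IsCompact L) (hLp : IsPreconnected L)
    (h0 : g 0 ∈ L) (h1 : g 1 ∈ L) : Set.range g ⊆ L := by
  have hpre : IsPreconnected (Set.range g ∩ L) :=
    HU _ _ ⟨isCompact_range hg, isConnected_range hg⟩ ⟨hLc, ⟨g 0, h0⟩, hLp⟩
  have hQ : IsPreconnected (g ⁻¹' (Set.range g ∩ L)) :=
    preconnected_preimage hg hgi hpre Set.inter_subset_left
  have h0Q : (0 : unitInterval) ∈ g ⁻¹' (Set.range g ∩ L) := ⟨Set.mem_range_self _, h0⟩
  have h1Q : (1 : unitInterval) ∈ g ⁻¹' (Set.range g ∩ L) := ⟨Set.mem_range_self _, h1⟩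
  rintro x ⟨u, rfl⟩
  exact (hQ.ordConnected.out h0Q h1Q ⟨unitInterval.nonneg', unitInterval.le_one'⟩).2

/-- In a fan with top `t`, a leg ending at an endpoint and a leg ending outside the first leg
meet exactly in `t`. -/
lemma legs_meet_top {X : Type*} [MetricSpace X] {t : X} (hX : IsFanWithTop X t)
    {g fz : unitInterval → X} (hg : Continuous g) (hgi : Function.Injective g)
    (hz : Continuous fz) (hzi : Function.Injective fz)
    (hg0 : g 0 = t) (hz0 : fz 0 = t)
    (hend : ¬ OrderGe X (g 1) 2)
    (hzB : fz 1 ∉ Set.range g) :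
    Set.range g ∩ Set.range fz = {t} := by
  obtain ⟨⟨hcomp, hconn, harc, HU⟩, hram⟩ := hX
  haveI : CompactSpace X := hcomp
  have h01 : (0 : unitInterval) ≠ 1 := fun hh => by
    have := congrArg Subtype.val hh
    norm_num at this
  set C : Set X := Set.range g ∩ Set.range fz with hC_def
  have htC : t ∈ C := ⟨hg0 ▸ Set.mem_range_self 0, hz0 ▸ Set.mem_range_self 0⟩
  have hCpre : IsPreconnected C :=
    HU _ _ ⟨isCompact_range hg, isConnected_range hg⟩
      ⟨isCompact_range hz, isConnected_range hz⟩
  have hCc : IsCompact C := (isCompact_range hg).inter_right (isCompact_range hz).isClosed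
  obtain ⟨c, hc⟩ := exists_Icc_param hg hgi hCpre hCc Set.inter_subset_left
    (by rw [hg0]; exact htC)
  obtain ⟨c', hc'⟩ := exists_Icc_param hz hzi hCpre hCc Set.inter_subset_right
    (by rw [hz0]; exact htC)
  rcases eq_or_ne c 0 with rfl | hc0
  · rw [hC_def] at hc ⊢
    rw [hc, Set.Icc_self, Set.image_singleton, hg0]
  exfalso
  have hrC : g c ∈ C := hc ▸ Set.mem_image_of_mem g ⟨unitInterval.nonneg', le_rfl⟩
  have hr2C : fz c' ∈ C := hc' ▸ Set.mem_image_of_mem fz ⟨unitInterval.nonneg', le_rfl⟩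
  have hrt : g c ≠ t := fun hh => hc0 (hgi (by rw [hg0]; exact hh))
  have hc'0 : c' ≠ 0 := by
    rintro rfl
    rw [Set.Icc_self, Set.image_singleton, hz0] at hc'
    apply hrt
    have := hrC
    rw [hc'] at this
    simpa using this
  have hc'1 : c' ≠ 1 := by
    rintro rfl
    exact hzB (hr2C.1)
  -- the key: any point of `range g` lying on the outer part of the `fz`-leg is `fz c'`
  have hkey : ∀ x, x ∈ Set.range g → x ∈ fz '' Set.Icc c' 1 → x = fz c' := by
    rintro x hxg ⟨y, hy, rfl⟩
    have hxC : fz y ∈ C := ⟨hxg, Set.mem_range_self _⟩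
    rw [hc'] at hxC
    obtain ⟨y', hy', hyy'⟩ := hxC
    have : y' = y := hzi hyy'
    subst this
    have : y' = c' := le_antisymm hy'.2 hy.1
    rw [this]
  rcases eq_or_ne c 1 with rfl | hc1
  · -- the endpoint `g 1` would have order ≥ 2
    have heC : g 1 ∈ C := hrC
    obtain ⟨w, hw, hwe⟩ : g 1 ∈ fz '' Set.Icc 0 c' := hc' ▸ heC
    have hw0 : w ≠ 0 := by
      rintro rfl
      rw [hz0] at hwe
      exact hrt hwe.symm
    have hw1 : w ≠ 1 := by
      rintro rfl
      exact hzB (hwe ▸ Set.mem_range_self 1)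
    apply hend
    have ha1 : IsArcWith (fz '' Set.uIcc w 0) (g 1) t := by
      rcases arcSeg hz hzi w 0 with ⟨heq, -⟩ | harc1
      · exact absurd (hzi heq) hw0
      · rwa [hwe, hz0] at harc1
    have ha2 : IsArcWith (fz '' Set.uIcc w 1) (g 1) (fz 1) := by
      rcases arcSeg hz hzi w 1 with ⟨heq, -⟩ | harc2
      · exact absurd (hzi heq) hw1
      · rwa [hwe] at harc2
    have hint : fz '' Set.uIcc w 0 ∩ fz '' Set.uIcc w 1 = {g 1} := by
      rw [← Set.image_inter hzi, Set.uIcc_of_ge unitInterval.nonneg',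
        Set.uIcc_of_le unitInterval.le_one',
        Set.Icc_inter_Icc_eq_singleton unitInterval.nonneg' unitInterval.le_one',
        Set.image_singleton, hwe]
    refine ⟨![fz '' Set.uIcc w 0, fz '' Set.uIcc w 1], ?_, ?_⟩
    · intro i
      fin_cases i
      · exact ⟨t, ha1⟩
      · exact ⟨fz 1, ha2⟩
    · intro i j hij
      fin_cases i <;> fin_cases j
      · simp at hij
      · exact hint
      · rw [Set.inter_comm]; exact hint
      · simp at hij
  -- now 0 < c < 1 : produce a ramification point different from t
  obtain ⟨dd, hdd, hddr⟩ : fz c' ∈ g '' Set.Icc 0 c := hc ▸ hr2C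
  have hr2t : fz c' ≠ t := fun hh => hc'0 (hzi (by rw [hz0]; exact hh))
  have hdd0 : dd ≠ 0 := by
    rintro rfl
    rw [hg0] at hddr
    exact hr2t hddr.symm
  have singleton_of : ∀ p : X, ∀ S : Set X, p ∈ S → (∀ x ∈ S, x = p) → S = {p} := by
    intro p S hp hall
    apply Set.eq_of_subset_of_subset
    · intro x hx; exact hall x hx
    · intro x hx; rw [hx]; exact hp
  have hInt2 : ∀ a b : unitInterval, fz '' Set.uIcc c' 1 ∩ g '' Set.uIcc a b ⊆ {fz c'} := by
    rintro a b x ⟨hx2, hx1⟩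
    have hxg : x ∈ Set.range g := Set.image_subset_range _ _ hx1
    have hx2' : x ∈ fz '' Set.Icc c' 1 := by
      rwa [Set.uIcc_of_le unitInterval.le_one'] at hx2
    exact hkey x hxg hx2'
  have harc3 : IsArcWith (fz '' Set.uIcc c' 1) (fz c') (fz 1) := by
    rcases arcSeg hz hzi c' 1 with ⟨heq, -⟩ | harc3
    · exact absurd (hzi heq) hc'1
    · exact harc3
  have hr2mem3 : fz c' ∈ fz '' Set.uIcc c' 1 := Set.mem_image_of_mem fz Set.left_mem_uIcc
  have hram_of : ∀ p : X, OrderGe X p 3 → p = t := by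
    intro p hp
    have : p ∈ ramificationPoints X := hp
    rw [hram] at this
    exact this
  have hrr : fz c' = g c := by
    by_contra hne
    have hddc : dd ≠ c := by
      rintro rfl
      exact hne hddr.symm
    apply hr2t
    apply hram_of
    have ha1 : IsArcWith (g '' Set.uIcc dd 0) (fz c') t := by
      rcases arcSeg hg hgi dd 0 with ⟨heq, -⟩ | ha
      · exact absurd (hgi heq) hdd0
      · rwa [hddr, hg0] at ha
    have ha2 : IsArcWith (g '' Set.uIcc dd c) (fz c') (g c) := by
      rcases arcSeg hg hgi dd c with ⟨heq, -⟩ | ha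
      · exact absurd (hgi heq) hddc
      · rwa [hddr] at ha
    have ha3 : IsArcWith (fz '' Set.uIcc c' 1) (fz c') (fz 1) := harc3
    have hk01 : g '' Set.uIcc dd 0 ∩ g '' Set.uIcc dd c = {fz c'} := by
      rw [← Set.image_inter hgi, Set.uIcc_of_ge unitInterval.nonneg',
        Set.uIcc_of_le hdd.2, Set.Icc_inter_Icc_eq_singleton unitInterval.nonneg' hdd.2,
        Set.image_singleton, hddr]
    have hk02 : g '' Set.uIcc dd 0 ∩ fz '' Set.uIcc c' 1 = {fz c'} := by
      refine singleton_of _ _ (Set.mem_inter (hddr ▸ Set.mem_image_of_mem g Set.left_mem_uIcc) hr2mem3) ?_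
      intro x hx
      exact hInt2 dd 0 (Set.mem_inter hx.2 hx.1)
    have hk12 : g '' Set.uIcc dd c ∩ fz '' Set.uIcc c' 1 = {fz c'} := by
      refine singleton_of _ _ (Set.mem_inter (hddr ▸ Set.mem_image_of_mem g Set.left_mem_uIcc) hr2mem3) ?_
      intro x hx
      exact hInt2 dd c (Set.mem_inter hx.2 hx.1)
    refine ⟨![g '' Set.uIcc dd 0, g '' Set.uIcc dd c, fz '' Set.uIcc c' 1], ?_, ?_⟩
    · intro i
      fin_cases i
      · exact ⟨t, ha1⟩
      · exact ⟨g c, ha2⟩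
      · exact ⟨fz 1, ha3⟩
    · intro i j hij
      fin_cases i <;> fin_cases j
      · simp at hij
      · exact hk01
      · exact hk02
      · rw [Set.inter_comm]; exact hk01
      · simp at hij
      · exact hk12
      · rw [Set.inter_comm]; exact hk02
      · rw [Set.inter_comm]; exact hk12
      · simp at hij
  -- finally r := g c is a ramification point distinct from t
  apply hrt
  apply hram_of
  have ha1 : IsArcWith (g '' Set.uIcc c 0) (g c) t := by
    rcases arcSeg hg hgi c 0 with ⟨heq, -⟩ | ha
    · exact absurd (hgi heq) hc0
    · rwa [hg0] at ha
  have ha2 : IsArcWith (g '' Set.uIcc c 1) (g c) (g 1) := by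
    rcases arcSeg hg hgi c 1 with ⟨heq, -⟩ | ha
    · exact absurd (hgi heq) hc1
    · exact ha
  have ha3 : IsArcWith (fz '' Set.uIcc c' 1) (g c) (fz 1) := by
    rw [← hrr]; exact harc3
  have hrmem3 : g c ∈ fz '' Set.uIcc c' 1 := hrr ▸ hr2mem3
  have hk01 : g '' Set.uIcc c 0 ∩ g '' Set.uIcc c 1 = {g c} := by
    rw [← Set.image_inter hgi, Set.uIcc_of_ge unitInterval.nonneg',
      Set.uIcc_of_le unitInterval.le_one',
      Set.Icc_inter_Icc_eq_singleton unitInterval.nonneg' unitInterval.le_one',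
      Set.image_singleton]
  have hk02 : g '' Set.uIcc c 0 ∩ fz '' Set.uIcc c' 1 = {g c} := by
    refine singleton_of _ _ (Set.mem_inter (Set.mem_image_of_mem g Set.left_mem_uIcc) hrmem3) ?_
    intro x hx
    rw [← hrr]
    exact hInt2 c 0 (Set.mem_inter hx.2 hx.1)
  have hk12 : g '' Set.uIcc c 1 ∩ fz '' Set.uIcc c' 1 = {g c} := by
    refine singleton_of _ _ (Set.mem_inter (Set.mem_image_of_mem g Set.left_mem_uIcc) hrmem3) ?_
    intro x hx
    rw [← hrr]
    exact hInt2 c 1 (Set.mem_inter hx.2 hx.1)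
  refine ⟨![g '' Set.uIcc c 0, g '' Set.uIcc c 1, fz '' Set.uIcc c' 1], ?_, ?_⟩
  · intro i
    fin_cases i
    · exact ⟨t, ha1⟩
    · exact ⟨g 1, ha2⟩
    · exact ⟨fz 1, ha3⟩
  · intro i j hij
    fin_cases i <;> fin_cases j
    · simp at hij
    · exact hk01
    · exact hk02
    · rw [Set.inter_comm]; exact hk01
    · simp at hij
    · exact hk12
    · rw [Set.inter_comm]; exact hk02
    · rw [Set.inter_comm]; exact hk12
    · simp at hij

end DendroidHelpers


/-- Let `X` be a fan with top `t`. If for each `x ∈ X − {t}` we have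
`(tx) ∩ S(X) ≠ ∅` (where `(tx) = tx − {t,x}` for the unique arc `tx`), then
`E(X) ⊆ S(X)`. -/
theorem endpoints_subset_smoothSet
    (X : Type*) [MetricSpace X] (t : X)
    (hX : IsFanWithTop X t)
    (h : ∀ x : X, x ≠ t → ∀ A : Set X, IsArcWith A t x →
      ((A \ {t, x}) ∩ smoothSet X t).Nonempty) :
    endpoints X ⊆ smoothSet X t := by
  obtain ⟨⟨hcomp, hconn, harc, HU⟩, hram⟩ := hX
  haveI : CompactSpace X := hcomp
  intro e hE
  have hE2 : ¬ OrderGe X e 2 := hE.2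
  have htram : OrderGe X t 3 := by
    have ht : t ∈ ramificationPoints X := by rw [hram]; rfl
    exact ht
  have het : e ≠ t := by
    rintro rfl
    exact hE2 (OrderGe.anti (by norm_num) htram)
  intro α A B hα hA hB
  have hBarc : IsArcWith B t e := by
    rcases hB with ⟨hh, -⟩ | hh
    · exact absurd hh.symm het
    · exact hh
  obtain ⟨g, hg, hgi, hgB, hg0, hg1⟩ := hBarc.exists_param
  obtain ⟨s, hsdiff, hssm⟩ := h e het B hBarc
  have hst : s ≠ t := fun hh => hsdiff.2 (Or.inl hh)
  by_contra hnot
  rw [Metric.tendsto_atTop] at hnot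
  push_neg at hnot
  obtain ⟨ε, hεpos, hfr⟩ := hnot
  have hfreq : ∃ᶠ n in atTop, ε ≤ hausdorffDist (A n) B := by
    rw [Filter.frequently_atTop]
    intro N
    obtain ⟨n, hn, hd⟩ := hfr N
    refine ⟨n, hn, ?_⟩
    rwa [Real.dist_0_eq_abs, abs_of_nonneg hausdorffDist_nonneg] at hd
  have hev : ∀ᶠ n in atTop, α n ≠ t := hα.eventually_ne het
  obtain ⟨φ, hφmono, hφ⟩ := Filter.extraction_of_frequently_atTop (hfreq.and_eventually hev)
  have hAarc : ∀ k, IsArcWith (A (φ k)) t (α (φ k)) := by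
    intro k
    rcases hA (φ k) with ⟨hh, -⟩ | hh
    · exact absurd hh.symm (hφ k).2
    · exact hh
  choose f hf hfi hfr' hf0 hf1 using fun k => (hAarc k).exists_param
  set K : ℕ → TopologicalSpace.NonemptyCompacts X := fun k =>
    ⟨⟨A (φ k), (hAarc k).isCompact⟩, ⟨t, (hAarc k).left_mem⟩⟩ with hK_def
  obtain ⟨L, -, ψ, hψmono, hψ⟩ :=
    isCompact_univ.tendsto_subseq (x := K) (fun n => Set.mem_univ _)
  have hαtend : Tendsto (fun n => α (φ (ψ n))) atTop (nhds e) :=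
    hα.comp ((hφmono.comp hψmono).tendsto_atTop)
  have heL : e ∈ (L : Set X) :=
    limit_mem hψ (fun n => (hAarc (ψ n)).right_mem) hαtend
  have htL : t ∈ (L : Set X) :=
    limit_mem hψ (fun n => (hAarc (ψ n)).left_mem) tendsto_const_nhds
  have hLpre : IsPreconnected (L : Set X) :=
    preconnected_limit hψ (fun n => (hAarc (ψ n)).isPreconnected)
  have hBL : B ⊆ (L : Set X) := by
    rw [← hgB]
    exact arc_subset HU hg hgi L.isCompact hLpre (by rw [hg0]; exact htL)
      (by rw [hg1]; exact heL)
  have hdistL : Tendsto (fun n => dist ((K ∘ ψ) n) L) atTop (nhds 0) :=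
    tendsto_iff_dist_tendsto_zero.1 hψ
  obtain ⟨z, hzL, hzB⟩ : ∃ z ∈ (L : Set X), z ∉ B := by
    by_contra hcon
    push_neg at hcon
    have hLB : (L : Set X) = B := Set.eq_of_subset_of_subset hcon hBL
    obtain ⟨n, hn⟩ := (hdistL.eventually (eventually_lt_nhds hεpos)).exists
    have hKn : ((K ∘ ψ) n : Set X) = A (φ (ψ n)) := rfl
    have hεle : ε ≤ dist ((K ∘ ψ) n) L := by
      rw [Metric.NonemptyCompacts.dist_eq, hKn, hLB]
      exact (hφ (ψ n)).1
    linarith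
  have hzt : z ≠ t := fun hh => hzB (hh ▸ hBarc.left_mem)
  obtain ⟨Z, hZarc⟩ := harc t z (Ne.symm hzt)
  obtain ⟨fz, hfz, hfzi, hfzZ, hfz0, hfz1⟩ := hZarc.exists_param
  obtain ⟨s', hs'diff, hs'sm⟩ := h z hzt Z hZarc
  have hs't : s' ≠ t := fun hh => hs'diff.2 (Or.inl hh)
  have hZL : Set.range fz ⊆ (L : Set X) :=
    arc_subset HU hfz hfzi L.isCompact hLpre (by rw [hfz0]; exact htL)
      (by rw [hfz1]; exact hzL)
  have hmeet : Set.range g ∩ Set.range fz = {t} :=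
    legs_meet_top ⟨⟨hcomp, hconn, harc, HU⟩, hram⟩ hg hgi hfz hfzi hg0 hfz0
      (by rw [hg1]; exact hE2) (by rw [hfz1, hgB]; exact hzB)
  have hsL : s ∈ (L : Set X) := hBL hsdiff.1
  have hs'L : s' ∈ (L : Set X) := hZL (by rw [hfzZ]; exact hs'diff.1)
  obtain ⟨b, hbmem, hbtend⟩ := approx_seq hψ hsL
  obtain ⟨b', hb'mem, hb'tend⟩ := approx_seq hψ hs'L
  have hbmem' : ∀ n, b n ∈ Set.range (f (ψ n)) := fun n => by
    rw [hfr']; exact hbmem n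
  choose u hu using hbmem'
  have hb'mem' : ∀ n, b' n ∈ Set.range (f (ψ n)) := fun n => by
    rw [hfr']; exact hb'mem n
  choose v hv using hb'mem'
  obtain ⟨ps, hps⟩ : s ∈ Set.range g := by rw [hgB]; exact hsdiff.1
  obtain ⟨ps', hps'⟩ : s' ∈ Set.range fz := by rw [hfzZ]; exact hs'diff.1
  set B1 : Set X := g '' Set.uIcc 0 ps with hB1_def
  set B2 : Set X := fz '' Set.uIcc 0 ps' with hB2_def
  have hB1arc : IsArcOrPt B1 t s := by
    have := arcSeg hg hgi 0 ps; rwa [hg0, hps] at this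
  have hB2arc : IsArcOrPt B2 t s' := by
    have := arcSeg hfz hfzi 0 ps'; rwa [hfz0, hps'] at this
  have hTarc : ∀ n, IsArcOrPt (f (ψ n) '' Set.uIcc 0 (u n)) t (b n) := by
    intro n
    have := arcSeg (hf (ψ n)) (hfi (ψ n)) 0 (u n)
    rwa [hf0, hu] at this
  have hT'arc : ∀ n, IsArcOrPt (f (ψ n) '' Set.uIcc 0 (v n)) t (b' n) := by
    intro n
    have := arcSeg (hf (ψ n)) (hfi (ψ n)) 0 (v n)
    rwa [hf0, hv] at this
  have htend1 := hssm b (fun n => f (ψ n) '' Set.uIcc 0 (u n)) B1 hbtend hTarc hB1arc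
  have htend2 := hs'sm b' (fun n => f (ψ n) '' Set.uIcc 0 (v n)) B2 hb'tend hT'arc hB2arc
  have hcase : (∃ᶠ n in atTop, v n ≤ u n) ∨ (∃ᶠ n in atTop, u n ≤ v n) := by
    by_contra hcon
    push_neg at hcon
    obtain ⟨h1, h2⟩ := hcon
    obtain ⟨n, hn1, hn2⟩ := (h1.and h2).exists
    exact absurd hn1 (not_lt.2 hn2.le)
  rcases hcase with hcase | hcase
  · obtain ⟨χ, hχmono, hχ⟩ := Filter.extraction_of_frequently_atTop hcase
    have hmem : ∀ k, b' (χ k) ∈ f (ψ (χ k)) '' Set.uIcc 0 (u (χ k)) := by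
      intro k
      rw [← hv (χ k)]
      refine Set.mem_image_of_mem _ ?_
      rw [Set.uIcc_of_le unitInterval.nonneg']
      exact ⟨unitInterval.nonneg', hχ k⟩
    have hB1ne : B1.Nonempty := hB1arc.nonempty
    have hle : ∀ k, infDist s' B1 ≤
        hausdorffDist (f (ψ (χ k)) '' Set.uIcc 0 (u (χ k))) B1 + dist s' (b' (χ k)) := by
      intro k
      calc infDist s' B1 ≤ infDist (b' (χ k)) B1 + dist s' (b' (χ k)) :=
            infDist_le_infDist_add_dist
        _ ≤ hausdorffDist (f (ψ (χ k)) '' Set.uIcc 0 (u (χ k))) B1 + dist s' (b' (χ k)) := by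
            gcongr
            exact infDist_le_hausdorffDist_of_mem (hmem k)
              (hEdist_ne_top _ _ (hTarc (χ k)).nonempty hB1ne)
    have htend : Tendsto (fun k =>
        hausdorffDist (f (ψ (χ k)) '' Set.uIcc 0 (u (χ k))) B1 + dist s' (b' (χ k)))
        atTop (nhds 0) := by
      have t1 : Tendsto (fun k => dist s' (b' (χ k))) atTop (nhds 0) := by
        have := tendsto_iff_dist_tendsto_zero.1 (hb'tend.comp hχmono.tendsto_atTop)
        exact this.congr (fun k => dist_comm _ _)
      have t2 := htend1.comp hχmono.tendsto_atTop
      simpa using t2.add t1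
    have hzero : infDist s' B1 ≤ 0 := ge_of_tendsto' htend hle
    have hs'B1 : s' ∈ B1 := by
      rw [(hB1arc.isCompact.isClosed).mem_iff_infDist_zero hB1ne]
      exact le_antisymm hzero infDist_nonneg
    have hmem2 : s' ∈ Set.range g ∩ Set.range fz :=
      ⟨Set.image_subset_range _ _ hs'B1, by rw [hfzZ]; exact hs'diff.1⟩
    rw [hmeet] at hmem2
    exact hs't hmem2
  · obtain ⟨χ, hχmono, hχ⟩ := Filter.extraction_of_frequently_atTop hcase
    have hmem : ∀ k, b (χ k) ∈ f (ψ (χ k)) '' Set.uIcc 0 (v (χ k)) := by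
      intro k
      rw [← hu (χ k)]
      refine Set.mem_image_of_mem _ ?_
      rw [Set.uIcc_of_le unitInterval.nonneg']
      exact ⟨unitInterval.nonneg', hχ k⟩
    have hB2ne : B2.Nonempty := hB2arc.nonempty
    have hle : ∀ k, infDist s B2 ≤
        hausdorffDist (f (ψ (χ k)) '' Set.uIcc 0 (v (χ k))) B2 + dist s (b (χ k)) := by
      intro k
      calc infDist s B2 ≤ infDist (b (χ k)) B2 + dist s (b (χ k)) :=
            infDist_le_infDist_add_dist
        _ ≤ hausdorffDist (f (ψ (χ k)) '' Set.uIcc 0 (v (χ k))) B2 + dist s (b (χ k)) := by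
            gcongr
            exact infDist_le_hausdorffDist_of_mem (hmem k)
              (hEdist_ne_top _ _ (hT'arc (χ k)).nonempty hB2ne)
    have htend : Tendsto (fun k =>
        hausdorffDist (f (ψ (χ k)) '' Set.uIcc 0 (v (χ k))) B2 + dist s (b (χ k)))
        atTop (nhds 0) := by
      have t1 : Tendsto (fun k => dist s (b (χ k))) atTop (nhds 0) := by
        have := tendsto_iff_dist_tendsto_zero.1 (hbtend.comp hχmono.tendsto_atTop)
        exact this.congr (fun k => dist_comm _ _)
      have t2 := htend2.comp hχmono.tendsto_atTop
      simpa using t2.add t1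
    have hzero : infDist s B2 ≤ 0 := ge_of_tendsto' htend hle
    have hsB2 : s ∈ B2 := by
      rw [(hB2arc.isCompact.isClosed).mem_iff_infDist_zero hB2ne]
      exact le_antisymm hzero infDist_nonneg
    have hmem2 : s ∈ Set.range g ∩ Set.range fz :=
      ⟨by rw [hgB]; exact hsdiff.1, Set.image_subset_range _ _ hsB2⟩
    rw [hmeet] at hmem2
    exact hst hmem2

end FansHomogeneity
end
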